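/- Let P be a globular operad. The functor part P of the monad preserves n-bijective morphisms of globular sets for every natural number n. Consequently the free P-algebra functor K preserves n-bijective maps. -/

import Mathlib

/-!
STATEMENT 16: Let `P` be a globular operad.  The functor part of `P` preserves
`n`-bijective morphisms of globular sets for every natural number `n`;
consequently the free `P`-algebra functor `K` preserves `n`-bijective maps.
-/

open CategoryTheory Limits Opposite

universe u

namespace Statement16

/-! ## The globe category and globular sets -/

/-- Objects of the globe category `G`. -/
structure Globe where
  n : ℕ

/-- Morphisms of the globe category: generated by cosource and cotarget maps
`σ, τ : n → n+1` subject to the coglobular relations, so that there are exactly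
two morphisms `n → m` for `n < m` (iterated cosource and cotarget) and only the
identity `n → n`. -/
inductive GlobeHom : Globe → Globe → Type where
  | id (a : Globe) : GlobeHom a a
  | src {a b : Globe} : a.n < b.n → GlobeHom a b
  | tgt {a b : Globe} : a.n < b.n → GlobeHom a b

namespace GlobeHom

theorem le : ∀ {a b : Globe}, GlobeHom a b → a.n ≤ b.n
  | _, _, .id _ => le_refl _
  | _, _, .src h => le_of_lt h
  | _, _, .tgt h => le_of_lt h

/-- Composition (in diagrammatic order); it is determined by its first
non-identity factor, which encodes the coglobular relations. -/
def comp : ∀ {a b c : Globe}, GlobeHom a b → GlobeHom b c → GlobeHom a c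
  | _, _, _, .id _, g => g
  | _, _, _, .src h, g => .src (lt_of_lt_of_le h g.le)
  | _, _, _, .tgt h, g => .tgt (lt_of_lt_of_le h g.le)

end GlobeHom

instance : Category Globe where
  Hom := GlobeHom
  id := GlobeHom.id
  comp := GlobeHom.comp
  id_comp f := rfl
  comp_id f := by cases f <;> rfl
  assoc f g h := by cases f <;> rfl

/-- Globular sets: presheaves on the globe category. -/
abbrev GlobularSet : Type 1 := Globeᵒᵖ ⥤ Type

/-- The set of `m`-cells of a globular set. -/
abbrev cell (X : GlobularSet) (m : ℕ) : Type := X.obj (op ⟨m⟩)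

/-- The `k`-source of an `m`-cell. -/
def csrc (X : GlobularSet) {k m : ℕ} (h : k < m) : cell X m → cell X k :=
  X.map (Quiver.Hom.op (GlobeHom.src h))

/-- The `k`-target of an `m`-cell. -/
def ctgt (X : GlobularSet) {k m : ℕ} (h : k < m) : cell X m → cell X k :=
  X.map (Quiver.Hom.op (GlobeHom.tgt h))

/-- A morphism of globular sets is `n`-bijective (for an integer `n ≥ -1`) if it
is bijective in dimensions `0, …, n`; every morphism is `(-1)`-bijective. -/
def ZBijective (n : ℤ) {X Y : GlobularSet} (f : X ⟶ Y) : Prop :=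
  ∀ i : ℕ, (i : ℤ) ≤ n → Function.Bijective (f.app (op ⟨i⟩))

/-- Parallel pairs of `i`-cells (every pair of `0`-cells is parallel). -/
def Parallel (X : GlobularSet) : ∀ (i : ℕ), cell X i → cell X i → Prop
  | 0, _, _ => True
  | (i + 1), a, b => csrc X (Nat.lt_succ_self i) a = csrc X (Nat.lt_succ_self i) b ∧
      ctgt X (Nat.lt_succ_self i) a = ctgt X (Nat.lt_succ_self i) b

/-- The square comparing `(i+1)`-cells with parallel pairs of `i`-cells is a
pullback: every `(i+1)`-cell of `Y` whose boundary lifts to `X` lifts uniquely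
to an `(i+1)`-cell of `X`. -/
def FullyFaithfulAt (i : ℕ) {X Y : GlobularSet} (f : X ⟶ Y) : Prop :=
  ∀ (a b : cell X i), Parallel X i a b →
    ∀ y : cell Y (i + 1),
      csrc Y (Nat.lt_succ_self i) y = f.app (op ⟨i⟩) a →
      ctgt Y (Nat.lt_succ_self i) y = f.app (op ⟨i⟩) b →
      ∃! x : cell X (i + 1),
        f.app (op ⟨i + 1⟩) x = y ∧
        csrc X (Nat.lt_succ_self i) x = a ∧ ctgt X (Nat.lt_succ_self i) x = b

/-- A morphism of globular sets is `n`-fully faithful (for an integer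
`n ≥ -1`): for `n ≥ 0` the comparison squares in dimensions `≥ n` are
pullbacks; only isomorphisms are `(-1)`-fully faithful. -/
def ZFullyFaithful (n : ℤ) {X Y : GlobularSet} (f : X ⟶ Y) : Prop :=
  if n = -1 then IsIso f
  else ∀ i : ℕ, n ≤ (i : ℤ) → FullyFaithfulAt i f

/-! ## Strict ω-categories -/

/-- The data of a strict ω-category: a globular set with composition of
`m`-cells along a `k`-cell boundary for every `k < m`, and identities.
`comp h x y` is the composite of `x` followed by `y` along their common
`k`-boundary. -/
structure PreOmega : Type 1 where
  C : GlobularSet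
  comp : ∀ {k m : ℕ}, k < m → cell C m → cell C m → cell C m
  ident : ∀ m : ℕ, cell C m → cell C (m + 1)

/-- Iterated identities. -/
def PreOmega.iterId (A : PreOmega) {k : ℕ} :
    (m : ℕ) → k ≤ m → cell A.C k → cell A.C m
  | 0, h, x => (Nat.le_zero.mp h) ▸ x
  | (m + 1), h, x =>
      if e : k = m + 1 then e ▸ x
      else A.ident m (A.iterId m (by omega) x)

/-- Strict ω-categories: the data of `PreOmega` subject to the usual axioms
(boundaries of composites, boundaries of identities, associativity, units,
functoriality of identities, and interchange). -/
structure StrictOmegaCat : Type 1 extends PreOmega where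
  src_comp : ∀ {k m : ℕ} (h : k < m) (x y : cell C m),
      ctgt C h x = csrc C h y → csrc C h (comp h x y) = csrc C h x
  tgt_comp : ∀ {k m : ℕ} (h : k < m) (x y : cell C m),
      ctgt C h x = csrc C h y → ctgt C h (comp h x y) = ctgt C h y
  bdry_comp_lower : ∀ {j k m : ℕ} (hj : j < k) (h : k < m) (x y : cell C m),
      ctgt C h x = csrc C h y →
      csrc C (hj.trans h) (comp h x y) = csrc C (hj.trans h) x ∧
      ctgt C (hj.trans h) (comp h x y) = ctgt C (hj.trans h) x
  bdry_comp_mid : ∀ {k j m : ℕ} (h : k < m) (hkj : k < j) (hjm : j < m)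
      (x y : cell C m), ctgt C h x = csrc C h y →
      csrc C hjm (comp h x y) = comp hkj (csrc C hjm x) (csrc C hjm y) ∧
      ctgt C hjm (comp h x y) = comp hkj (ctgt C hjm x) (ctgt C hjm y)
  src_ident : ∀ (m : ℕ) (x : cell C m),
      csrc C (Nat.lt_succ_self m) (ident m x) = x
  tgt_ident : ∀ (m : ℕ) (x : cell C m),
      ctgt C (Nat.lt_succ_self m) (ident m x) = x
  comp_assoc : ∀ {k m : ℕ} (h : k < m) (x y z : cell C m),
      ctgt C h x = csrc C h y → ctgt C h y = csrc C h z →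
      comp h (comp h x y) z = comp h x (comp h y z)
  comp_unit_left : ∀ {k m : ℕ} (h : k < m) (x : cell C m),
      comp h (toPreOmega.iterId m h.le (csrc C h x)) x = x
  comp_unit_right : ∀ {k m : ℕ} (h : k < m) (x : cell C m),
      comp h x (toPreOmega.iterId m h.le (ctgt C h x)) = x
  ident_comp : ∀ {k m : ℕ} (h : k < m) (x y : cell C m),
      ctgt C h x = csrc C h y →
      ident m (comp h x y) = comp (h.trans (Nat.lt_succ_self m))
        (ident m x) (ident m y)
  interchange : ∀ {j k m : ℕ} (hj : j < k) (hk : k < m) (x y z w : cell C m),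
      ctgt C hk x = csrc C hk y → ctgt C hk z = csrc C hk w →
      ctgt C (hj.trans hk) x = csrc C (hj.trans hk) z →
      comp (hj.trans hk) (comp hk x y) (comp hk z w)
        = comp hk (comp (hj.trans hk) x z) (comp (hj.trans hk) y w)

/-- Strict maps of strict ω-categories. -/
@[ext]
structure OmegaHom (A B : StrictOmegaCat) : Type where
  f : A.C ⟶ B.C
  comp_map : ∀ {k m : ℕ} (h : k < m) (x y : cell A.C m),
      ctgt A.C h x = csrc A.C h y →
      f.app (op ⟨m⟩) (A.comp h x y)
        = B.comp h (f.app (op ⟨m⟩) x) (f.app (op ⟨m⟩) y)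
  ident_map : ∀ (m : ℕ) (x : cell A.C m),
      f.app (op ⟨m + 1⟩) (A.ident m x) = B.ident m (f.app (op ⟨m⟩) x)

theorem OmegaHom.src_map {A B : StrictOmegaCat} (F : OmegaHom A B) {k m : ℕ}
    (h : k < m) (x : cell A.C m) :
    F.f.app (op ⟨k⟩) (csrc A.C h x) = csrc B.C h (F.f.app (op ⟨m⟩) x) :=
  NatTrans.naturality_apply F.f (Quiver.Hom.op (GlobeHom.src h)) x

theorem OmegaHom.tgt_map {A B : StrictOmegaCat} (F : OmegaHom A B) {k m : ℕ}
    (h : k < m) (x : cell A.C m) :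
    F.f.app (op ⟨k⟩) (ctgt A.C h x) = ctgt B.C h (F.f.app (op ⟨m⟩) x) :=
  NatTrans.naturality_apply F.f (Quiver.Hom.op (GlobeHom.tgt h)) x

instance : Category StrictOmegaCat where
  Hom := OmegaHom
  id A := { f := 𝟙 A.C, comp_map := by intros; rfl, ident_map := by intros; rfl }
  comp {A B C} F G :=
    { f := F.f ≫ G.f
      comp_map := by
        intro k m h x y hc
        have h1 := F.comp_map h x y hc
        have h2 := G.comp_map h (F.f.app (op ⟨m⟩) x) (F.f.app (op ⟨m⟩) y)
          (by rw [← F.tgt_map, ← F.src_map, hc])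
        simp only [NatTrans.comp_app, types_comp_apply, h1, h2]
      ident_map := by
        intro m x
        simp only [NatTrans.comp_app, types_comp_apply, F.ident_map, G.ident_map] }
  id_comp F := OmegaHom.ext (Category.id_comp F.f)
  comp_id F := OmegaHom.ext (Category.comp_id F.f)
  assoc F G H := OmegaHom.ext (Category.assoc F.f G.f H.f)

/-- The forgetful functor from strict ω-categories to globular sets. -/
def forgetOmega : StrictOmegaCat ⥤ GlobularSet where
  obj A := A.C
  map F := F.f



/-- A morphism of globular sets is `n`-bijective (`n ∈ ℕ`) when it is bijective
in dimensions `0, …, n`. -/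
def NBijective (n : ℕ) {X Y : GlobularSet} (f : X ⟶ Y) : Prop :=
  ∀ i : ℕ, i ≤ n → Function.Bijective (f.app (op ⟨i⟩))

/-! ## Auxiliary lemmas about globular sets -/

namespace Aux

/-- `X.map` of an arbitrary globe hom, as a function on cells. -/
abbrev gmap (X : GlobularSet) {k m : ℕ} (v : GlobeHom ⟨k⟩ ⟨m⟩) : cell X m → cell X k :=
  X.map (Quiver.Hom.op (v : (⟨k⟩ : Globe) ⟶ ⟨m⟩))

theorem glob_src_comp {a b c : Globe} (h : a.n < b.n) (v : GlobeHom b c) :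
    GlobeHom.comp (GlobeHom.src h) v = GlobeHom.src (lt_of_lt_of_le h v.le) := rfl

theorem glob_tgt_comp {a b c : Globe} (h : a.n < b.n) (v : GlobeHom b c) :
    GlobeHom.comp (GlobeHom.tgt h) v = GlobeHom.tgt (lt_of_lt_of_le h v.le) := rfl

theorem csrc_map (X : GlobularSet) {k j m : ℕ} (h : k < j) (v : GlobeHom ⟨j⟩ ⟨m⟩)
    (x : cell X m) :
    csrc X h (gmap X v x) = csrc X (lt_of_lt_of_le h (GlobeHom.le v)) x := by
  have h1 : gmap X (GlobeHom.comp (GlobeHom.src h) v) x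
      = csrc X h (gmap X v x) := by
    show X.map _ x = (X.map _ ≫ X.map _) x
    rw [← X.map_comp]; rfl
  rw [glob_src_comp] at h1
  exact h1.symm

theorem ctgt_map (X : GlobularSet) {k j m : ℕ} (h : k < j) (v : GlobeHom ⟨j⟩ ⟨m⟩)
    (x : cell X m) :
    ctgt X h (gmap X v x) = ctgt X (lt_of_lt_of_le h (GlobeHom.le v)) x := by
  have h1 : gmap X (GlobeHom.comp (GlobeHom.tgt h) v) x
      = ctgt X h (gmap X v x) := by
    show X.map _ x = (X.map _ ≫ X.map _) x
    rw [← X.map_comp]; rfl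
  rw [glob_tgt_comp] at h1
  exact h1.symm

theorem csrc_csrc (X : GlobularSet) {k j m : ℕ} (h1 : k < j) (h2 : j < m) (x : cell X m) :
    csrc X h1 (csrc X h2 x) = csrc X (h1.trans h2) x := csrc_map X h1 (.src h2) x

theorem csrc_ctgt (X : GlobularSet) {k j m : ℕ} (h1 : k < j) (h2 : j < m) (x : cell X m) :
    csrc X h1 (ctgt X h2 x) = csrc X (h1.trans h2) x := csrc_map X h1 (.tgt h2) x

theorem ctgt_csrc (X : GlobularSet) {k j m : ℕ} (h1 : k < j) (h2 : j < m) (x : cell X m) :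
    ctgt X h1 (csrc X h2 x) = ctgt X (h1.trans h2) x := ctgt_map X h1 (.src h2) x

theorem ctgt_ctgt (X : GlobularSet) {k j m : ℕ} (h1 : k < j) (h2 : j < m) (x : cell X m) :
    ctgt X h1 (ctgt X h2 x) = ctgt X (h1.trans h2) x := ctgt_map X h1 (.tgt h2) x

/-- Naturality of a globular map at sources. -/
theorem app_csrc {X Y : GlobularSet} (w : X ⟶ Y) {k m : ℕ} (h : k < m) (x : cell X m) :
    w.app (op ⟨k⟩) (csrc X h x) = csrc Y h (w.app (op ⟨m⟩) x) :=
  NatTrans.naturality_apply w (Quiver.Hom.op (GlobeHom.src h)) x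

theorem app_ctgt {X Y : GlobularSet} (w : X ⟶ Y) {k m : ℕ} (h : k < m) (x : cell X m) :
    w.app (op ⟨k⟩) (ctgt X h x) = ctgt Y h (w.app (op ⟨m⟩) x) :=
  NatTrans.naturality_apply w (Quiver.Hom.op (GlobeHom.tgt h)) x

theorem parallel_refl (X : GlobularSet) (n : ℕ) (a : cell X n) : Parallel X n a a := by
  cases n with
  | zero => trivial
  | succ n => exact ⟨rfl, rfl⟩

theorem parallel_src {X : GlobularSet} {n : ℕ} {a b : cell X n}
    (hp : Parallel X n a b) {k : ℕ} (hk : k < n) : csrc X hk a = csrc X hk b := by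
  cases n with
  | zero => omega
  | succ n =>
    rcases Nat.lt_succ_iff_lt_or_eq.mp hk with h | h
    · rw [← csrc_csrc X h (Nat.lt_succ_self n) a, ← csrc_csrc X h (Nat.lt_succ_self n) b, hp.1]
    · subst h; exact hp.1

theorem parallel_tgt {X : GlobularSet} {n : ℕ} {a b : cell X n}
    (hp : Parallel X n a b) {k : ℕ} (hk : k < n) : ctgt X hk a = ctgt X hk b := by
  cases n with
  | zero => omega
  | succ n =>
    rcases Nat.lt_succ_iff_lt_or_eq.mp hk with h | h
    · rw [← ctgt_ctgt X h (Nat.lt_succ_self n) a, ← ctgt_ctgt X h (Nat.lt_succ_self n) b, hp.2]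
    · subst h; exact hp.2

theorem parallel_boundary (X : GlobularSet) {n m : ℕ} (h : n < m) (z : cell X m) :
    Parallel X n (csrc X h z) (ctgt X h z) := by
  cases n with
  | zero => trivial
  | succ n =>
    exact ⟨by rw [csrc_csrc, csrc_ctgt], by rw [ctgt_csrc, ctgt_ctgt]⟩

/-- The canonical hom `⟨k⟩ → ⟨m⟩` for `k ≤ m` picking out iterated sources. -/
def srcLE {k m : ℕ} (h : k ≤ m) : GlobeHom ⟨k⟩ ⟨m⟩ :=
  if he : k = m then he ▸ GlobeHom.id ⟨k⟩ else .src (h.lt_of_ne he)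

def tgtLE {k m : ℕ} (h : k ≤ m) : GlobeHom ⟨k⟩ ⟨m⟩ :=
  if he : k = m then he ▸ GlobeHom.id ⟨k⟩ else .tgt (h.lt_of_ne he)

theorem srcLE_refl {k : ℕ} (h : k ≤ k) : srcLE h = GlobeHom.id ⟨k⟩ := dif_pos rfl

theorem tgtLE_refl {k : ℕ} (h : k ≤ k) : tgtLE h = GlobeHom.id ⟨k⟩ := dif_pos rfl

theorem srcLE_of_lt {k m : ℕ} (h : k ≤ m) (h' : k < m) : srcLE h = .src h' :=
  dif_neg (Nat.ne_of_lt h')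

theorem tgtLE_of_lt {k m : ℕ} (h : k ≤ m) (h' : k < m) : tgtLE h = .tgt h' :=
  dif_neg (Nat.ne_of_lt h')

end Aux

/-! ## The indiscrete-above-`n` completion of a strict ω-category -/

/-- Cells of the completion: below (and at) level `n` the cells of `A`;
above `n`, parallel pairs of `n`-cells of `A`. -/
inductive QCell (n : ℕ) (A : StrictOmegaCat) : ℕ → Type where
  | low {j : ℕ} (h : j ≤ n) (a : cell A.C j) : QCell n A j
  | high {j : ℕ} (h : n < j) (a b : cell A.C n) (hp : Parallel A.C n a b) : QCell n A j

namespace Aux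

variable (n : ℕ) (A : StrictOmegaCat)

/-- Iterated source map from level `n` down to level `k`. -/
def downS {k : ℕ} (hk : k ≤ n) : cell A.C n → cell A.C k := gmap A.C (srcLE hk)

/-- Iterated target map from level `n` down to level `k`. -/
def downT {k : ℕ} (hk : k ≤ n) : cell A.C n → cell A.C k := gmap A.C (tgtLE hk)

theorem downS_self (hk : n ≤ n) (x : cell A.C n) : downS n A hk x = x := by
  rw [downS, srcLE_refl]
  exact ConcreteCategory.congr_hom (A.C.map_id (op ⟨n⟩)) x

theorem downT_self (hk : n ≤ n) (x : cell A.C n) : downT n A hk x = x := by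
  rw [downT, tgtLE_refl]
  exact ConcreteCategory.congr_hom (A.C.map_id (op ⟨n⟩)) x

theorem csrc_eq_downS {k : ℕ} (h : k < n) (x : cell A.C n) :
    csrc A.C h x = downS n A h.le x := by rw [downS, srcLE_of_lt _ h]; rfl

theorem ctgt_eq_downT {k : ℕ} (h : k < n) (x : cell A.C n) :
    ctgt A.C h x = downT n A h.le x := by rw [downT, tgtLE_of_lt _ h]; rfl

theorem csrc_downS {k j : ℕ} (h : k < j) (hj : j ≤ n) (x : cell A.C n) :
    csrc A.C h (downS n A hj x) = downS n A (le_trans h.le hj) x := by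
  rw [downS, csrc_map, downS, srcLE_of_lt _ (lt_of_lt_of_le h hj)]; rfl

theorem csrc_downT {k j : ℕ} (h : k < j) (hj : j ≤ n) (x : cell A.C n) :
    csrc A.C h (downT n A hj x) = downS n A (le_trans h.le hj) x := by
  rw [downT, csrc_map, downS, srcLE_of_lt _ (lt_of_lt_of_le h hj)]; rfl

theorem ctgt_downS {k j : ℕ} (h : k < j) (hj : j ≤ n) (x : cell A.C n) :
    ctgt A.C h (downS n A hj x) = downT n A (le_trans h.le hj) x := by
  rw [downS, ctgt_map, downT, tgtLE_of_lt _ (lt_of_lt_of_le h hj)]; rfl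

theorem ctgt_downT {k j : ℕ} (h : k < j) (hj : j ≤ n) (x : cell A.C n) :
    ctgt A.C h (downT n A hj x) = downT n A (le_trans h.le hj) x := by
  rw [downT, ctgt_map, downT, tgtLE_of_lt _ (lt_of_lt_of_le h hj)]; rfl

theorem downS_parallel {a b : cell A.C n} (hp : Parallel A.C n a b)
    {k : ℕ} (hk : k < n) : downS n A hk.le a = downS n A hk.le b := by
  rw [← csrc_eq_downS, ← csrc_eq_downS]; exact parallel_src hp hk

theorem downT_parallel {a b : cell A.C n} (hp : Parallel A.C n a b)
    {k : ℕ} (hk : k < n) : downT n A hk.le a = downT n A hk.le b := by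
  rw [← ctgt_eq_downT, ← ctgt_eq_downT]; exact parallel_tgt hp hk

variable {n A}

/-- Source action on `QCell`. -/
def qsrc {k j : ℕ} (h : k < j) : QCell n A j → QCell n A k
  | .low hj a => .low (le_trans h.le hj) (csrc A.C h a)
  | .high _ a b hp =>
      if hk : k ≤ n then .low hk (downS n A hk a) else .high (not_le.mp hk) a b hp

/-- Target action on `QCell`. -/
def qtgt {k j : ℕ} (h : k < j) : QCell n A j → QCell n A k
  | .low hj a => .low (le_trans h.le hj) (ctgt A.C h a)
  | .high _ a b hp =>
      if hk : k ≤ n then .low hk (downT n A hk b) else .high (not_le.mp hk) a b hp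

/-- Action of an arbitrary globe hom on `QCell`. -/
def qact : ∀ {a b : Globe}, GlobeHom a b → QCell n A b.n → QCell n A a.n
  | _, _, .id _ => fun x => x
  | _, _, .src h => qsrc h
  | _, _, .tgt h => qtgt h

theorem qsrc_low {k j : ℕ} (h : k < j) (hj : j ≤ n) (a : cell A.C j) :
    qsrc (n := n) (A := A) h (.low hj a) = .low (le_trans h.le hj) (csrc A.C h a) := rfl

theorem qtgt_low {k j : ℕ} (h : k < j) (hj : j ≤ n) (a : cell A.C j) :
    qtgt (n := n) (A := A) h (.low hj a) = .low (le_trans h.le hj) (ctgt A.C h a) := rfl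

theorem qsrc_high_le {k j : ℕ} (h : k < j) (hm : n < j) (aa bb : cell A.C n)
    (hp : Parallel A.C n aa bb) (hk : k ≤ n) :
    qsrc h (.high hm aa bb hp) = .low hk (downS n A hk aa) := dif_pos hk

theorem qtgt_high_le {k j : ℕ} (h : k < j) (hm : n < j) (aa bb : cell A.C n)
    (hp : Parallel A.C n aa bb) (hk : k ≤ n) :
    qtgt h (.high hm aa bb hp) = .low hk (downT n A hk bb) := dif_pos hk

theorem qsrc_high_gt {k j : ℕ} (h : k < j) (hm : n < j) (aa bb : cell A.C n)
    (hp : Parallel A.C n aa bb) (hk : n < k) :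
    qsrc h (.high hm aa bb hp) = .high hk aa bb hp := by
  rw [qsrc, dif_neg (not_le.mpr hk)]

theorem qtgt_high_gt {k j : ℕ} (h : k < j) (hm : n < j) (aa bb : cell A.C n)
    (hp : Parallel A.C n aa bb) (hk : n < k) :
    qtgt h (.high hm aa bb hp) = .high hk aa bb hp := by
  rw [qtgt, dif_neg (not_le.mpr hk)]

theorem qact_comp : ∀ {a b c : Globe} (u : GlobeHom a b) (v : GlobeHom b c)
    (x : QCell n A c.n), qact (GlobeHom.comp u v) x = qact u (qact v x) := by
  intro a b c u v x
  cases u with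
  | id => rfl
  | src h =>
    show qsrc _ x = qsrc h (qact v x)
    cases v with
    | id => rfl
    | src h' =>
      show qsrc _ x = qsrc h (qsrc h' x)
      cases x with
      | low hj aa => rw [qsrc_low, qsrc_low, qsrc_low, csrc_csrc]
      | high hm aa bb hp =>
        by_cases hb : b.n ≤ n
        · rw [qsrc_high_le h' hm aa bb hp hb, qsrc_low,
            qsrc_high_le _ hm aa bb hp (le_trans h.le hb), csrc_downS]
        · rw [qsrc_high_gt h' hm aa bb hp (not_le.mp hb)]; rfl
    | tgt h' =>
      show qsrc _ x = qsrc h (qtgt h' x)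
      cases x with
      | low hj aa => rw [qsrc_low, qtgt_low, qsrc_low, csrc_ctgt]
      | high hm aa bb hp =>
        by_cases hb : b.n ≤ n
        · rw [qtgt_high_le h' hm aa bb hp hb, qsrc_low,
            qsrc_high_le _ hm aa bb hp (le_trans h.le hb), csrc_downT,
            downS_parallel n A hp (lt_of_lt_of_le h hb)]
        · rw [qtgt_high_gt h' hm aa bb hp (not_le.mp hb)]; rfl
  | tgt h =>
    show qtgt _ x = qtgt h (qact v x)
    cases v with
    | id => rfl
    | src h' =>
      show qtgt _ x = qtgt h (qsrc h' x)
      cases x with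
      | low hj aa => rw [qtgt_low, qsrc_low, qtgt_low, ctgt_csrc]
      | high hm aa bb hp =>
        by_cases hb : b.n ≤ n
        · rw [qsrc_high_le h' hm aa bb hp hb, qtgt_low,
            qtgt_high_le _ hm aa bb hp (le_trans h.le hb), ctgt_downS,
            downT_parallel n A hp (lt_of_lt_of_le h hb)]
        · rw [qsrc_high_gt h' hm aa bb hp (not_le.mp hb)]; rfl
    | tgt h' =>
      show qtgt _ x = qtgt h (qtgt h' x)
      cases x with
      | low hj aa => rw [qtgt_low, qtgt_low, qtgt_low, ctgt_ctgt]
      | high hm aa bb hp =>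
        by_cases hb : b.n ≤ n
        · rw [qtgt_high_le h' hm aa bb hp hb, qtgt_low,
            qtgt_high_le _ hm aa bb hp (le_trans h.le hb), ctgt_downT]
        · rw [qtgt_high_gt h' hm aa bb hp (not_le.mp hb)]; rfl

variable (n A)

/-- The underlying globular set of the completion. -/
def QGlob : GlobularSet where
  obj g := QCell n A g.unop.n
  map u := ↾(qact u.unop)
  map_id g := rfl
  map_comp {a b c} u v := by ext x; exact qact_comp v.unop u.unop x

theorem qcell_src {k j : ℕ} (h : k < j) (x : QCell n A j) :
    csrc (QGlob n A) h x = qsrc h x := rfl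

theorem qcell_tgt {k j : ℕ} (h : k < j) (x : QCell n A j) :
    ctgt (QGlob n A) h x = qtgt h x := rfl

end Aux
namespace Aux

theorem glob_hom_self {m : ℕ} (u : GlobeHom ⟨m⟩ ⟨m⟩) : u = GlobeHom.id ⟨m⟩ := by
  cases u with
  | id => rfl
  | src h => exact absurd h (by omega)
  | tgt h => exact absurd h (by omega)

theorem gmap_self (X : GlobularSet) {m : ℕ} (u : GlobeHom ⟨m⟩ ⟨m⟩) (x : cell X m) :
    gmap X u x = x := by
  rw [glob_hom_self u]
  exact ConcreteCategory.congr_hom (X.map_id (op ⟨m⟩)) x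

theorem gmap_gmap (X : GlobularSet) {k j m : ℕ} (u : GlobeHom ⟨k⟩ ⟨j⟩)
    (v : GlobeHom ⟨j⟩ ⟨m⟩) (x : cell X m) :
    gmap X u (gmap X v x) = gmap X (GlobeHom.comp u v) x := by
  show (X.map _ ≫ X.map _) x = X.map _ x
  rw [← X.map_comp]; rfl

variable {n : ℕ} {A : StrictOmegaCat}

theorem low_congr {j : ℕ} (h h' : j ≤ n) {a a' : cell A.C j} (e : a = a') :
    (QCell.low h a : QCell n A j) = QCell.low h' a' := by subst e; rfl

theorem high_congr {j : ℕ} (h h' : n < j) {a a' b b' : cell A.C n}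
    {hp : Parallel A.C n a b} {hp' : Parallel A.C n a' b'} (e1 : a = a') (e2 : b = b') :
    (QCell.high h a b hp : QCell n A j) = QCell.high h' a' b' hp' := by
  subst e1; subst e2; rfl

theorem low_inj {j : ℕ} {h h' : j ≤ n} {a a' : cell A.C j}
    (e : (QCell.low h a : QCell n A j) = QCell.low h' a') : a = a' := by
  injection e

theorem high_inj {j : ℕ} {h h' : n < j} {a a' b b' : cell A.C n}
    {hp : Parallel A.C n a b} {hp' : Parallel A.C n a' b'}
    (e : (QCell.high h a b hp : QCell n A j) = QCell.high h' a' b' hp') :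
    a = a' ∧ b = b' := by
  constructor
  · injection e
  · injection e

/-- Transitivity-style lemma for parallel pairs. -/
theorem parallel_trans {a b c : cell A.C n} (h1 : Parallel A.C n a b)
    (h2 : Parallel A.C n b c) : Parallel A.C n a c := by
  cases n with
  | zero => trivial
  | succ n => exact ⟨h1.1.trans h2.1, h1.2.trans h2.2⟩

/-- Composition of parallel pairs is parallel. -/
theorem parallel_comp {k : ℕ} (hk : k < n) {a b a' b' : cell A.C n}
    (hp : Parallel A.C n a b) (hp' : Parallel A.C n a' b')
    (e1 : ctgt A.C hk a = csrc A.C hk a') (e2 : ctgt A.C hk b = csrc A.C hk b') :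
    Parallel A.C n (A.comp hk a a') (A.comp hk b b') := by
  cases n with
  | zero => trivial
  | succ n =>
    rcases Nat.lt_succ_iff_lt_or_eq.mp hk with hkn | hkn
    · constructor
      · rw [(A.bdry_comp_mid hk hkn (Nat.lt_succ_self n) a a' e1).1,
          (A.bdry_comp_mid hk hkn (Nat.lt_succ_self n) b b' e2).1, hp.1, hp'.1]
      · rw [(A.bdry_comp_mid hk hkn (Nat.lt_succ_self n) a a' e1).2,
          (A.bdry_comp_mid hk hkn (Nat.lt_succ_self n) b b' e2).2, hp.2, hp'.2]
    · subst hkn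
      constructor
      · rw [A.src_comp hk a a' e1, A.src_comp hk b b' e2]; exact hp.1
      · rw [A.tgt_comp hk a a' e1, A.tgt_comp hk b b' e2]; exact hp'.2

open Classical in
/-- Composition on `QCell`s. -/
noncomputable def qcomp {k m : ℕ} (h : k < m) : QCell n A m → QCell n A m → QCell n A m
  | .low hm a, .low _ b => .low hm (A.comp h a b)
  | .high hm a b hp, .high _ a' b' hp' =>
      if hkn : k < n then
        if hq : Parallel A.C n (A.comp hkn a a') (A.comp hkn b b') then
          .high hm (A.comp hkn a a') (A.comp hkn b b') hq
        else .high hm a b hp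
      else if hk' : k = n then
        if hq : Parallel A.C n a b' then .high hm a b' hq else .high hm a b hp
      else .high hm a' b' hp'
  | x, _ => x

/-- Identities on `QCell`s. -/
def qident (m : ℕ) : QCell n A m → QCell n A (m + 1)
  | .low hm a =>
      if h' : m + 1 ≤ n then .low h' (A.ident m a)
      else
        .high (by omega)
          (gmap A.C (srcLE (by omega : n ≤ m)) a)
          (gmap A.C (srcLE (by omega : n ≤ m)) a)
          (parallel_refl _ _ _)
  | .high hm a b hp => .high (by omega) a b hp

theorem qcomp_low {k m : ℕ} (h : k < m) (hm hm' : m ≤ n) (a b : cell A.C m) :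
    qcomp h (.low hm a) (.low hm' b) = .low hm (A.comp h a b) := rfl

theorem qcomp_high_lt {k m : ℕ} (h : k < m) (hm hm' : n < m) {a b a' b' : cell A.C n}
    (hp : Parallel A.C n a b) (hp' : Parallel A.C n a' b') (hkn : k < n)
    (hq : Parallel A.C n (A.comp hkn a a') (A.comp hkn b b')) :
    qcomp h (.high hm a b hp) (.high hm' a' b' hp')
      = .high hm (A.comp hkn a a') (A.comp hkn b b') hq := by
  show dite _ _ _ = _
  rw [dif_pos hkn, dif_pos hq]

theorem qcomp_high_lt_junk {k m : ℕ} (h : k < m) (hm hm' : n < m) {a b a' b' : cell A.C n}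
    (hp : Parallel A.C n a b) (hp' : Parallel A.C n a' b') (hkn : k < n)
    (hq : ¬ Parallel A.C n (A.comp hkn a a') (A.comp hkn b b')) :
    qcomp h (.high hm a b hp) (.high hm' a' b' hp') = .high hm a b hp := by
  show dite _ _ _ = _
  rw [dif_pos hkn, dif_neg hq]

theorem qcomp_high_eq {k m : ℕ} (h : k < m) (hm hm' : n < m) {a b a' b' : cell A.C n}
    (hp : Parallel A.C n a b) (hp' : Parallel A.C n a' b') (hkn : k = n)
    (hq : Parallel A.C n a b') :
    qcomp h (.high hm a b hp) (.high hm' a' b' hp') = .high hm a b' hq := by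
  show dite _ _ _ = _
  rw [dif_neg (by omega : ¬ k < n), dif_pos hkn, dif_pos hq]

theorem qcomp_high_eq_junk {k m : ℕ} (h : k < m) (hm hm' : n < m) {a b a' b' : cell A.C n}
    (hp : Parallel A.C n a b) (hp' : Parallel A.C n a' b') (hkn : k = n)
    (hq : ¬ Parallel A.C n a b') :
    qcomp h (.high hm a b hp) (.high hm' a' b' hp') = .high hm a b hp := by
  show dite _ _ _ = _
  rw [dif_neg (by omega : ¬ k < n), dif_pos hkn, dif_neg hq]

theorem qcomp_high_gt {k m : ℕ} (h : k < m) (hm hm' : n < m) {a b a' b' : cell A.C n}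
    (hp : Parallel A.C n a b) (hp' : Parallel A.C n a' b') (hkn : n < k) :
    qcomp h (.high hm a b hp) (.high hm' a' b' hp') = .high hm a' b' hp' := by
  show dite _ _ _ = _
  rw [dif_neg (by omega : ¬ k < n), dif_neg (by omega : ¬ k = n)]

theorem qident_low {m : ℕ} (hm : m ≤ n) (h' : m + 1 ≤ n) (a : cell A.C m) :
    qident m (.low hm a : QCell n A m) = .low h' (A.ident m a) := dif_pos h'

theorem qident_high {m : ℕ} (hm : n < m) {a b : cell A.C n} (hp : Parallel A.C n a b)
    (h' : n < m + 1) :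
    qident m (.high hm a b hp : QCell n A m) = .high h' a b hp := rfl

theorem qident_cross (hm : n ≤ n) (h' : ¬ (n + 1 ≤ n)) (a : cell A.C n) :
    qident n (.low hm a : QCell n A n)
      = .high (Nat.lt_succ_self n) a a (parallel_refl A.C n a) := by
  show dite _ _ _ = _
  rw [dif_neg h']
  exact high_congr _ _ (gmap_self A.C _ a) (gmap_self A.C _ a)

end Aux
namespace Aux

variable (n : ℕ) (A : StrictOmegaCat)

/-- The `PreOmega` structure of the completion. -/
noncomputable def QPre : PreOmega where
  C := QGlob n A
  comp := fun h x y => qcomp h x y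
  ident := fun m x => qident m x

theorem QPre_ident {m : ℕ} (x : QCell n A m) : (QPre n A).ident m x = qident m x := rfl

theorem QPre_comp {k m : ℕ} (h : k < m) (x y : QCell n A m) :
    (QPre n A).comp h x y = qcomp h x y := rfl

variable {n A}

theorem iterId_self (B : PreOmega) {k : ℕ} (h : k ≤ k) (x : cell B.C k) :
    B.iterId k h x = x := by
  cases k with
  | zero => rfl
  | succ k =>
    show dite _ _ _ = _
    rw [dif_pos rfl]

theorem iterId_step (B : PreOmega) {k m : ℕ} (h : k ≤ m + 1) (hk : k ≤ m) (x : cell B.C k) :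
    B.iterId (m + 1) h x = B.ident m (B.iterId m hk x) := by
  show dite _ _ _ = _
  rw [dif_neg (by omega : ¬ k = m + 1)]

theorem qiter_high {k m : ℕ} (h : k ≤ m) (hk : n < k) {a b : cell A.C n}
    (hp : Parallel A.C n a b) (hm : n < m) :
    (QPre n A).iterId m h (.high hk a b hp) = .high hm a b hp := by
  induction m with
  | zero => omega
  | succ m ih =>
    by_cases he : k = m + 1
    · subst he
      erw [iterId_self]
    · erw [iterId_step _ _ (by omega), ih (by omega) (by omega)]
      exact high_congr _ _ rfl rfl

theorem qiter_low {k m : ℕ} (h : k ≤ m) (hk : k ≤ n) (hm : m ≤ n) (a : cell A.C k) :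
    (QPre n A).iterId m h (.low hk a) = .low hm (A.toPreOmega.iterId m h a) := by
  induction m with
  | zero =>
    have e : k = 0 := by omega
    subst e
    erw [iterId_self (QPre n A), iterId_self A.toPreOmega]
  | succ m ih =>
    by_cases he : k = m + 1
    · subst he
      erw [iterId_self (QPre n A), iterId_self A.toPreOmega]
    · erw [iterId_step _ _ (by omega), iterId_step A.toPreOmega _ (by omega),
        ih (by omega) (by omega)]
      exact qident_low (by omega) hm _

theorem qiter_cross {k m : ℕ} (h : k ≤ m) (hk : k ≤ n) (hm : n < m) (a : cell A.C k) :
    (QPre n A).iterId m h (.low hk a)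
      = .high hm (A.toPreOmega.iterId n hk a) (A.toPreOmega.iterId n hk a)
          (parallel_refl A.C n _) := by
  induction m with
  | zero => omega
  | succ m ih =>
    by_cases hmn : n < m
    · erw [iterId_step _ _ (by omega), ih (by omega) hmn]
      exact high_congr _ _ rfl rfl
    · -- m = n
      have e : m = n := by omega
      subst e
      erw [iterId_step _ _ (by omega), qiter_low (by omega) hk le_rfl, QPre_ident,
        qident_cross le_rfl (by omega)]


/-! Extraction of composability conditions. -/

theorem qcomposable_low {k m : ℕ} (h : k < m) {hm hm' : m ≤ n} {a b : cell A.C m}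
    (hc : qtgt h (.low hm a : QCell n A m) = qsrc h (.low hm' b)) :
    ctgt A.C h a = csrc A.C h b := by
  rw [qtgt_low, qsrc_low] at hc
  exact low_inj hc

theorem qcomposable_lt {k m : ℕ} (h : k < m) {hm hm' : n < m} {a b a' b' : cell A.C n}
    {hp : Parallel A.C n a b} {hp' : Parallel A.C n a' b'} (hk : k < n)
    (hc : qtgt h (.high hm a b hp : QCell n A m) = qsrc h (.high hm' a' b' hp')) :
    ctgt A.C hk a = csrc A.C hk a' ∧ ctgt A.C hk b = csrc A.C hk b' := by
  rw [qtgt_high_le h hm a b hp hk.le, qsrc_high_le h hm' a' b' hp' hk.le] at hc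
  have e := low_inj hc
  rw [← ctgt_eq_downT n A hk, ← csrc_eq_downS n A hk] at e
  constructor
  · rw [parallel_tgt hp hk]; exact e
  · rw [e]; exact parallel_src hp' hk

theorem qcomposable_eq {m : ℕ} (h : n < m) {hm hm' : n < m} {a b a' b' : cell A.C n}
    {hp : Parallel A.C n a b} {hp' : Parallel A.C n a' b'}
    (hc : qtgt h (.high hm a b hp : QCell n A m) = qsrc h (.high hm' a' b' hp')) :
    b = a' := by
  rw [qtgt_high_le h hm a b hp le_rfl, qsrc_high_le h hm' a' b' hp' le_rfl] at hc
  have e := low_inj hc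
  rwa [downT_self, downS_self] at e

theorem qcomposable_gt {k m : ℕ} (h : k < m) {hm hm' : n < m} {a b a' b' : cell A.C n}
    {hp : Parallel A.C n a b} {hp' : Parallel A.C n a' b'} (hk : n < k)
    (hc : qtgt h (.high hm a b hp : QCell n A m) = qsrc h (.high hm' a' b' hp')) :
    a = a' ∧ b = b' := by
  rw [qtgt_high_gt h hm a b hp hk, qsrc_high_gt h hm' a' b' hp' hk] at hc
  exact high_inj hc

end Aux
namespace Aux

variable {n : ℕ} {A : StrictOmegaCat}

theorem parallel_symm {a b : cell A.C n} (hp : Parallel A.C n a b) :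
    Parallel A.C n b a := by
  cases n with
  | zero => trivial
  | succ n => exact ⟨hp.1.symm, hp.2.symm⟩

variable (n A)

set_option maxHeartbeats 1000000 in
/-- The indiscrete-above-`n` completion, as a strict ω-category. -/
noncomputable def QCat : StrictOmegaCat where
  toPreOmega := QPre n A
  src_comp := by
    intro k m h x y hc
    cases x with
    | low hm a =>
      cases y with
      | low hm' b =>
        show qsrc h (qcomp h (.low hm a) (.low hm' b)) = qsrc h (.low hm a)
        rw [qcomp_low, qsrc_low, qsrc_low]
        exact low_congr _ _ (A.src_comp h a b (qcomposable_low (hm := hm) (hm' := hm') h hc))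
      | high hm' a' b' hp' => exact absurd hm (by omega)
    | high hm a b hp =>
      cases y with
      | low hm' b' => exact absurd hm' (by omega)
      | high hm' a' b' hp' =>
        show qsrc h (qcomp h (.high hm a b hp) (.high hm' a' b' hp'))
          = qsrc h (.high hm a b hp)
        rcases lt_trichotomy k n with hk | hk | hk
        · obtain ⟨e1, e2⟩ := qcomposable_lt (hm := hm) (hm' := hm') h hk hc
          have hq := parallel_comp hk hp hp' e1 e2
          rw [qcomp_high_lt h hm hm' hp hp' hk hq,
            qsrc_high_le h hm _ _ hq hk.le, qsrc_high_le h hm a b hp hk.le]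
          refine low_congr _ _ ?_
          rw [← csrc_eq_downS n A hk, ← csrc_eq_downS n A hk]
          exact A.src_comp hk a a' e1
        · subst hk
          have e := qcomposable_eq (hm := hm) (hm' := hm') h hc
          have hq : Parallel A.C k a b' := parallel_trans hp (by rw [e]; exact hp')
          rw [qcomp_high_eq h hm hm' hp hp' rfl hq,
            qsrc_high_le h hm _ _ hq le_rfl, qsrc_high_le h hm a b hp le_rfl]
        · obtain ⟨e1, e2⟩ := qcomposable_gt (hm := hm) (hm' := hm') h hk hc
          rw [qcomp_high_gt h hm hm' hp hp' hk,
            qsrc_high_gt h hm' a' b' hp' hk, qsrc_high_gt h hm a b hp hk]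
          exact high_congr _ _ e1.symm e2.symm
  tgt_comp := by
    intro k m h x y hc
    cases x with
    | low hm a =>
      cases y with
      | low hm' b =>
        show qtgt h (qcomp h (.low hm a) (.low hm' b)) = qtgt h (.low hm' b)
        rw [qcomp_low, qtgt_low, qtgt_low]
        exact low_congr _ _ (A.tgt_comp h a b (qcomposable_low (hm := hm) (hm' := hm') h hc))
      | high hm' a' b' hp' => exact absurd hm (by omega)
    | high hm a b hp =>
      cases y with
      | low hm' b' => exact absurd hm' (by omega)
      | high hm' a' b' hp' =>
        show qtgt h (qcomp h (.high hm a b hp) (.high hm' a' b' hp'))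
          = qtgt h (.high hm' a' b' hp')
        rcases lt_trichotomy k n with hk | hk | hk
        · obtain ⟨e1, e2⟩ := qcomposable_lt (hm := hm) (hm' := hm') h hk hc
          have hq := parallel_comp hk hp hp' e1 e2
          rw [qcomp_high_lt h hm hm' hp hp' hk hq,
            qtgt_high_le h hm _ _ hq hk.le, qtgt_high_le h hm' a' b' hp' hk.le]
          refine low_congr _ _ ?_
          rw [← ctgt_eq_downT n A hk, ← ctgt_eq_downT n A hk]
          exact A.tgt_comp hk b b' e2
        · subst hk
          have e := qcomposable_eq (hm := hm) (hm' := hm') h hc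
          have hq : Parallel A.C k a b' := parallel_trans hp (by rw [e]; exact hp')
          rw [qcomp_high_eq h hm hm' hp hp' rfl hq,
            qtgt_high_le h hm _ _ hq le_rfl, qtgt_high_le h hm' a' b' hp' le_rfl]
        · obtain ⟨e1, e2⟩ := qcomposable_gt (hm := hm) (hm' := hm') h hk hc
          rw [qcomp_high_gt h hm hm' hp hp' hk, qtgt_high_gt h hm' a' b' hp' hk]
  bdry_comp_lower := by
    intro j k m hj h x y hc
    cases x with
    | low hm a =>
      cases y with
      | low hm' b =>
        have hab := qcomposable_low (hm := hm) (hm' := hm') h hc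
        constructor
        · show qsrc _ (qcomp h (.low hm a) (.low hm' b)) = qsrc _ (.low hm a)
          rw [qcomp_low, qsrc_low, qsrc_low]
          exact low_congr _ _ (A.bdry_comp_lower hj h a b hab).1
        · show qtgt _ (qcomp h (.low hm a) (.low hm' b)) = qtgt _ (.low hm a)
          rw [qcomp_low, qtgt_low, qtgt_low]
          exact low_congr _ _ (A.bdry_comp_lower hj h a b hab).2
      | high hm' a' b' hp' => exact absurd hm (by omega)
    | high hm a b hp =>
      cases y with
      | low hm' b' => exact absurd hm' (by omega)
      | high hm' a' b' hp' =>
        have hjm : j < m := hj.trans h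
        rcases lt_trichotomy k n with hk | hk | hk
        · have hjn : j < n := hj.trans hk
          obtain ⟨e1, e2⟩ := qcomposable_lt (hm := hm) (hm' := hm') h hk hc
          have hq := parallel_comp hk hp hp' e1 e2
          constructor
          · show qsrc hjm (qcomp h (.high hm a b hp) (.high hm' a' b' hp'))
              = qsrc hjm (.high hm a b hp)
            rw [qcomp_high_lt h hm hm' hp hp' hk hq,
              qsrc_high_le hjm hm _ _ hq hjn.le, qsrc_high_le hjm hm a b hp hjn.le]
            refine low_congr _ _ ?_
            rw [← csrc_eq_downS n A hjn, ← csrc_eq_downS n A hjn]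
            exact (A.bdry_comp_lower hj hk a a' e1).1
          · show qtgt hjm (qcomp h (.high hm a b hp) (.high hm' a' b' hp'))
              = qtgt hjm (.high hm a b hp)
            rw [qcomp_high_lt h hm hm' hp hp' hk hq,
              qtgt_high_le hjm hm _ _ hq hjn.le, qtgt_high_le hjm hm a b hp hjn.le]
            refine low_congr _ _ ?_
            rw [← ctgt_eq_downT n A hjn, ← ctgt_eq_downT n A hjn]
            exact (A.bdry_comp_lower hj hk b b' e2).2
        · subst hk
          have hjn : j < k := hj
          have e := qcomposable_eq (hm := hm) (hm' := hm') h hc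
          have hq : Parallel A.C k a b' := parallel_trans hp (by rw [e]; exact hp')
          constructor
          · show qsrc hjm (qcomp h (.high hm a b hp) (.high hm' a' b' hp'))
              = qsrc hjm (.high hm a b hp)
            rw [qcomp_high_eq h hm hm' hp hp' rfl hq,
              qsrc_high_le hjm hm _ _ hq hjn.le, qsrc_high_le hjm hm a b hp hjn.le]
          · show qtgt hjm (qcomp h (.high hm a b hp) (.high hm' a' b' hp'))
              = qtgt hjm (.high hm a b hp)
            rw [qcomp_high_eq h hm hm' hp hp' rfl hq,
              qtgt_high_le hjm hm _ _ hq hjn.le, qtgt_high_le hjm hm a b hp hjn.le]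
            refine low_congr _ _ ?_
            rw [← ctgt_eq_downT k A hjn, ← ctgt_eq_downT k A hjn, e]
            exact (parallel_tgt hp' hjn).symm
        · obtain ⟨e1, e2⟩ := qcomposable_gt (hm := hm) (hm' := hm') h hk hc
          constructor
          · show qsrc hjm (qcomp h (.high hm a b hp) (.high hm' a' b' hp'))
              = qsrc hjm (.high hm a b hp)
            rw [qcomp_high_gt h hm hm' hp hp' hk]
            by_cases hjn : j ≤ n
            · rw [qsrc_high_le hjm hm a' b' hp' hjn, qsrc_high_le hjm hm a b hp hjn]
              exact low_congr _ _ (congrArg (downS n A hjn) e1.symm)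
            · rw [qsrc_high_gt hjm hm a' b' hp' (not_le.mp hjn),
                qsrc_high_gt hjm hm a b hp (not_le.mp hjn)]
              exact high_congr _ _ e1.symm e2.symm
          · show qtgt hjm (qcomp h (.high hm a b hp) (.high hm' a' b' hp'))
              = qtgt hjm (.high hm a b hp)
            rw [qcomp_high_gt h hm hm' hp hp' hk]
            by_cases hjn : j ≤ n
            · rw [qtgt_high_le hjm hm a' b' hp' hjn, qtgt_high_le hjm hm a b hp hjn]
              exact low_congr _ _ (congrArg (downT n A hjn) e2.symm)
            · rw [qtgt_high_gt hjm hm a' b' hp' (not_le.mp hjn),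
                qtgt_high_gt hjm hm a b hp (not_le.mp hjn)]
              exact high_congr _ _ e1.symm e2.symm
  bdry_comp_mid := by
    intro k j m h hkj hjm x y hc
    cases x with
    | low hm a =>
      cases y with
      | low hm' b =>
        have hab := qcomposable_low (hm := hm) (hm' := hm') h hc
        have hjn : j ≤ n := (hjm.le).trans hm
        constructor
        · show qsrc hjm (qcomp h (.low hm a) (.low hm' b))
            = qcomp hkj (qsrc hjm (.low hm a)) (qsrc hjm (.low hm' b))
          rw [qcomp_low, qsrc_low, qsrc_low, qsrc_low, qcomp_low]
          exact low_congr _ _ (A.bdry_comp_mid h hkj hjm a b hab).1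
        · show qtgt hjm (qcomp h (.low hm a) (.low hm' b))
            = qcomp hkj (qtgt hjm (.low hm a)) (qtgt hjm (.low hm' b))
          rw [qcomp_low, qtgt_low, qtgt_low, qtgt_low, qcomp_low]
          exact low_congr _ _ (A.bdry_comp_mid h hkj hjm a b hab).2
      | high hm' a' b' hp' => exact absurd hm (by omega)
    | high hm a b hp =>
      cases y with
      | low hm' b' => exact absurd hm' (by omega)
      | high hm' a' b' hp' =>
        rcases lt_trichotomy k n with hk | hk | hk
        · obtain ⟨e1, e2⟩ := qcomposable_lt (hm := hm) (hm' := hm') h hk hc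
          have hq := parallel_comp hk hp hp' e1 e2
          rcases lt_trichotomy j n with hjn | hjn | hjn
          · constructor
            · show qsrc hjm (qcomp h (.high hm a b hp) (.high hm' a' b' hp'))
                = qcomp hkj (qsrc hjm (.high hm a b hp)) (qsrc hjm (.high hm' a' b' hp'))
              rw [qcomp_high_lt h hm hm' hp hp' hk hq,
                qsrc_high_le hjm hm _ _ hq hjn.le, qsrc_high_le hjm hm a b hp hjn.le,
                qsrc_high_le hjm hm' a' b' hp' hjn.le, qcomp_low]
              refine low_congr _ _ ?_
              rw [← csrc_eq_downS n A hjn, ← csrc_eq_downS n A hjn,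
                ← csrc_eq_downS n A hjn]
              exact (A.bdry_comp_mid hk hkj hjn a a' e1).1
            · show qtgt hjm (qcomp h (.high hm a b hp) (.high hm' a' b' hp'))
                = qcomp hkj (qtgt hjm (.high hm a b hp)) (qtgt hjm (.high hm' a' b' hp'))
              rw [qcomp_high_lt h hm hm' hp hp' hk hq,
                qtgt_high_le hjm hm _ _ hq hjn.le, qtgt_high_le hjm hm a b hp hjn.le,
                qtgt_high_le hjm hm' a' b' hp' hjn.le, qcomp_low]
              refine low_congr _ _ ?_
              rw [← ctgt_eq_downT n A hjn, ← ctgt_eq_downT n A hjn,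
                ← ctgt_eq_downT n A hjn]
              exact (A.bdry_comp_mid hk hkj hjn b b' e2).2
          · subst hjn
            constructor
            · show qsrc hjm (qcomp h (.high hm a b hp) (.high hm' a' b' hp'))
                = qcomp hkj (qsrc hjm (.high hm a b hp)) (qsrc hjm (.high hm' a' b' hp'))
              rw [qcomp_high_lt h hm hm' hp hp' hk hq,
                qsrc_high_le hjm hm _ _ hq le_rfl, qsrc_high_le hjm hm a b hp le_rfl,
                qsrc_high_le hjm hm' a' b' hp' le_rfl, qcomp_low, downS_self,
                downS_self, downS_self]
            · show qtgt hjm (qcomp h (.high hm a b hp) (.high hm' a' b' hp'))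
                = qcomp hkj (qtgt hjm (.high hm a b hp)) (qtgt hjm (.high hm' a' b' hp'))
              rw [qcomp_high_lt h hm hm' hp hp' hk hq,
                qtgt_high_le hjm hm _ _ hq le_rfl, qtgt_high_le hjm hm a b hp le_rfl,
                qtgt_high_le hjm hm' a' b' hp' le_rfl, qcomp_low, downT_self,
                downT_self, downT_self]
          · constructor
            · show qsrc hjm (qcomp h (.high hm a b hp) (.high hm' a' b' hp'))
                = qcomp hkj (qsrc hjm (.high hm a b hp)) (qsrc hjm (.high hm' a' b' hp'))
              rw [qcomp_high_lt h hm hm' hp hp' hk hq, qsrc_high_gt hjm hm _ _ hq hjn,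
                qsrc_high_gt hjm hm a b hp hjn, qsrc_high_gt hjm hm' a' b' hp' hjn,
                qcomp_high_lt hkj hjn hjn hp hp' hk hq]
            · show qtgt hjm (qcomp h (.high hm a b hp) (.high hm' a' b' hp'))
                = qcomp hkj (qtgt hjm (.high hm a b hp)) (qtgt hjm (.high hm' a' b' hp'))
              rw [qcomp_high_lt h hm hm' hp hp' hk hq, qtgt_high_gt hjm hm _ _ hq hjn,
                qtgt_high_gt hjm hm a b hp hjn, qtgt_high_gt hjm hm' a' b' hp' hjn,
                qcomp_high_lt hkj hjn hjn hp hp' hk hq]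
        · subst hk
          have hjn : k < j := hkj
          have e := qcomposable_eq (hm := hm) (hm' := hm') h hc
          have hq : Parallel A.C k a b' := parallel_trans hp (by rw [e]; exact hp')
          constructor
          · show qsrc hjm (qcomp h (.high hm a b hp) (.high hm' a' b' hp'))
              = qcomp hkj (qsrc hjm (.high hm a b hp)) (qsrc hjm (.high hm' a' b' hp'))
            rw [qcomp_high_eq h hm hm' hp hp' rfl hq, qsrc_high_gt hjm hm _ _ hq hjn,
              qsrc_high_gt hjm hm a b hp hjn, qsrc_high_gt hjm hm' a' b' hp' hjn,
              qcomp_high_eq hkj hjn hjn hp hp' rfl hq]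
          · show qtgt hjm (qcomp h (.high hm a b hp) (.high hm' a' b' hp'))
              = qcomp hkj (qtgt hjm (.high hm a b hp)) (qtgt hjm (.high hm' a' b' hp'))
            rw [qcomp_high_eq h hm hm' hp hp' rfl hq, qtgt_high_gt hjm hm _ _ hq hjn,
              qtgt_high_gt hjm hm a b hp hjn, qtgt_high_gt hjm hm' a' b' hp' hjn,
              qcomp_high_eq hkj hjn hjn hp hp' rfl hq]
        · have hjn : n < j := hk.trans hkj
          constructor
          · show qsrc hjm (qcomp h (.high hm a b hp) (.high hm' a' b' hp'))
              = qcomp hkj (qsrc hjm (.high hm a b hp)) (qsrc hjm (.high hm' a' b' hp'))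
            rw [qcomp_high_gt h hm hm' hp hp' hk, qsrc_high_gt hjm hm' a' b' hp' hjn,
              qsrc_high_gt hjm hm a b hp hjn, qcomp_high_gt hkj hjn hjn hp hp' hk]
          · show qtgt hjm (qcomp h (.high hm a b hp) (.high hm' a' b' hp'))
              = qcomp hkj (qtgt hjm (.high hm a b hp)) (qtgt hjm (.high hm' a' b' hp'))
            rw [qcomp_high_gt h hm hm' hp hp' hk, qtgt_high_gt hjm hm' a' b' hp' hjn,
              qtgt_high_gt hjm hm a b hp hjn, qcomp_high_gt hkj hjn hjn hp hp' hk]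
  src_ident := by
    intro m x
    change QCell n A m at x
    cases x with
    | low hm a =>
      show qsrc (Nat.lt_succ_self m) (qident m (.low hm a)) = .low hm a
      by_cases h' : m + 1 ≤ n
      · rw [qident_low hm h' a, qsrc_low]
        exact low_congr _ _ (A.src_ident m a)
      · have e : m = n := by omega
        subst e
        rw [qident_cross le_rfl (by omega) a,
          qsrc_high_le (Nat.lt_succ_self m) (Nat.lt_succ_self m) a a
            (parallel_refl A.C m a) le_rfl, downS_self]
    | high hm a b hp =>
      show qsrc (Nat.lt_succ_self m) (qident m (.high hm a b hp)) = .high hm a b hp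
      rw [qident_high hm hp (by omega), qsrc_high_gt (Nat.lt_succ_self m) _ a b hp hm]
  tgt_ident := by
    intro m x
    change QCell n A m at x
    cases x with
    | low hm a =>
      show qtgt (Nat.lt_succ_self m) (qident m (.low hm a)) = .low hm a
      by_cases h' : m + 1 ≤ n
      · rw [qident_low hm h' a, qtgt_low]
        exact low_congr _ _ (A.tgt_ident m a)
      · have e : m = n := by omega
        subst e
        rw [qident_cross le_rfl (by omega) a,
          qtgt_high_le (Nat.lt_succ_self m) (Nat.lt_succ_self m) a a
            (parallel_refl A.C m a) le_rfl, downT_self]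
    | high hm a b hp =>
      show qtgt (Nat.lt_succ_self m) (qident m (.high hm a b hp)) = .high hm a b hp
      rw [qident_high hm hp (by omega), qtgt_high_gt (Nat.lt_succ_self m) _ a b hp hm]
  comp_assoc := by
    intro k m h x y z hc1 hc2
    change QCell n A m at x y z
    cases x with
    | low hm a =>
      cases y with
      | low hm2 b =>
        cases z with
        | low hm3 c =>
          have e1 := qcomposable_low (hm := hm) (hm' := hm2) h hc1
          have e2 := qcomposable_low (hm := hm2) (hm' := hm3) h hc2
          show qcomp h (qcomp h (.low hm a) (.low hm2 b)) (.low hm3 c)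
            = qcomp h (.low hm a) (qcomp h (.low hm2 b) (.low hm3 c))
          rw [qcomp_low, qcomp_low, qcomp_low, qcomp_low]
          exact low_congr _ _ (A.comp_assoc h a b c e1 e2)
        | high hm3 a3 b3 hp3 => exact absurd hm (by omega)
      | high hm2 a2 b2 hp2 => exact absurd hm (by omega)
    | high hm a1 b1 hp1 =>
      cases y with
      | low hm2 b => exact absurd hm2 (by omega)
      | high hm2 a2 b2 hp2 =>
        cases z with
        | low hm3 c => exact absurd hm3 (by omega)
        | high hm3 a3 b3 hp3 =>
          show qcomp h (qcomp h (.high hm a1 b1 hp1) (.high hm2 a2 b2 hp2)) (.high hm3 a3 b3 hp3)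
            = qcomp h (.high hm a1 b1 hp1) (qcomp h (.high hm2 a2 b2 hp2) (.high hm3 a3 b3 hp3))
          rcases lt_trichotomy k n with hk | hk | hk
          · obtain ⟨e1, e2⟩ := qcomposable_lt (hm := hm) (hm' := hm2) h hk hc1
            obtain ⟨e3, e4⟩ := qcomposable_lt (hm := hm2) (hm' := hm3) h hk hc2
            have hq1 := parallel_comp hk hp1 hp2 e1 e2
            have f1 : ctgt A.C hk (A.comp hk a1 a2) = csrc A.C hk a3 := by
              rw [A.tgt_comp hk a1 a2 e1]; exact e3
            have f2 : ctgt A.C hk (A.comp hk b1 b2) = csrc A.C hk b3 := by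
              rw [A.tgt_comp hk b1 b2 e2]; exact e4
            have hq2 := parallel_comp hk hq1 hp3 f1 f2
            have hq3 := parallel_comp hk hp2 hp3 e3 e4
            have g1 : ctgt A.C hk a1 = csrc A.C hk (A.comp hk a2 a3) := by
              rw [A.src_comp hk a2 a3 e3]; exact e1
            have g2 : ctgt A.C hk b1 = csrc A.C hk (A.comp hk b2 b3) := by
              rw [A.src_comp hk b2 b3 e4]; exact e2
            have hq4 := parallel_comp hk hp1 hq3 g1 g2
            rw [qcomp_high_lt h hm hm2 hp1 hp2 hk hq1, qcomp_high_lt h hm hm3 hq1 hp3 hk hq2,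
              qcomp_high_lt h hm2 hm3 hp2 hp3 hk hq3, qcomp_high_lt h hm hm2 hp1 hq3 hk hq4]
            exact high_congr _ _ (A.comp_assoc hk a1 a2 a3 e1 e3) (A.comp_assoc hk b1 b2 b3 e2 e4)
          · subst hk
            have e1 := qcomposable_eq (hm := hm) (hm' := hm2) h hc1
            have e2 := qcomposable_eq (hm := hm2) (hm' := hm3) h hc2
            have hq1 : Parallel A.C k a1 b2 := parallel_trans hp1 (by rw [e1]; exact hp2)
            have hq3 : Parallel A.C k a2 b3 := parallel_trans hp2 (by rw [e2]; exact hp3)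
            have hq2 : Parallel A.C k a1 b3 := parallel_trans hq1 (by rw [e2]; exact hp3)
            rw [qcomp_high_eq h hm hm2 hp1 hp2 rfl hq1, qcomp_high_eq h hm hm3 hq1 hp3 rfl hq2,
              qcomp_high_eq h hm2 hm3 hp2 hp3 rfl hq3, qcomp_high_eq h hm hm2 hp1 hq3 rfl hq2]
          · refine Eq.trans (b := QCell.high hm a3 b3 hp3) ?_ ?_
            · rw [qcomp_high_gt h hm hm2 hp1 hp2 hk, qcomp_high_gt h hm hm3 hp2 hp3 hk]
            · rw [qcomp_high_gt h hm2 hm3 hp2 hp3 hk, qcomp_high_gt h hm hm2 hp1 hp3 hk]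
  comp_unit_left := by
    intro k m h x
    change QCell n A m at x
    cases x with
    | low hm a =>
      show qcomp h ((QPre n A).iterId m h.le (qsrc h (.low hm a))) (.low hm a) = .low hm a
      rw [qsrc_low, qiter_low h.le (h.le.trans hm) hm, qcomp_low]
      exact low_congr _ _ (A.comp_unit_left h a)
    | high hm a b hp =>
      show qcomp h ((QPre n A).iterId m h.le (qsrc h (.high hm a b hp))) (.high hm a b hp)
        = .high hm a b hp
      rcases lt_trichotomy k n with hk | hk | hk
      · rw [qsrc_high_le h hm a b hp hk.le, ← csrc_eq_downS n A hk,
          qiter_cross h.le hk.le hm]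
        have h1 : A.comp hk (A.toPreOmega.iterId n hk.le (csrc A.C hk a)) a = a :=
          A.comp_unit_left hk a
        have h2 : A.comp hk (A.toPreOmega.iterId n hk.le (csrc A.C hk a)) b = b := by
          rw [parallel_src hp hk]; exact A.comp_unit_left hk b
        have hq : Parallel A.C n
            (A.comp hk (A.toPreOmega.iterId n hk.le (csrc A.C hk a)) a)
            (A.comp hk (A.toPreOmega.iterId n hk.le (csrc A.C hk a)) b) := by
          rw [h1, h2]; exact hp
        rw [qcomp_high_lt h hm hm (parallel_refl A.C n _) hp hk hq]
        exact high_congr _ _ h1 h2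
      · subst hk
        rw [qsrc_high_le h hm a b hp le_rfl, downS_self, qiter_cross h.le le_rfl hm,
          iterId_self]
        rw [qcomp_high_eq h hm hm (parallel_refl A.C k a) hp rfl hp]
      · rw [qsrc_high_gt h hm a b hp hk, qiter_high h.le hk hp hm,
          qcomp_high_gt h hm hm hp hp hk]
  comp_unit_right := by
    intro k m h x
    change QCell n A m at x
    cases x with
    | low hm a =>
      show qcomp h (.low hm a) ((QPre n A).iterId m h.le (qtgt h (.low hm a))) = .low hm a
      rw [qtgt_low, qiter_low h.le (h.le.trans hm) hm, qcomp_low]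
      exact low_congr _ _ (A.comp_unit_right h a)
    | high hm a b hp =>
      show qcomp h (.high hm a b hp) ((QPre n A).iterId m h.le (qtgt h (.high hm a b hp)))
        = .high hm a b hp
      rcases lt_trichotomy k n with hk | hk | hk
      · rw [qtgt_high_le h hm a b hp hk.le, ← ctgt_eq_downT n A hk,
          qiter_cross h.le hk.le hm]
        have h1 : A.comp hk a (A.toPreOmega.iterId n hk.le (ctgt A.C hk b)) = a := by
          rw [← parallel_tgt hp hk]; exact A.comp_unit_right hk a
        have h2 : A.comp hk b (A.toPreOmega.iterId n hk.le (ctgt A.C hk b)) = b :=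
          A.comp_unit_right hk b
        have hq : Parallel A.C n
            (A.comp hk a (A.toPreOmega.iterId n hk.le (ctgt A.C hk b)))
            (A.comp hk b (A.toPreOmega.iterId n hk.le (ctgt A.C hk b))) := by
          rw [h1, h2]; exact hp
        rw [qcomp_high_lt h hm hm hp (parallel_refl A.C n _) hk hq]
        exact high_congr _ _ h1 h2
      · subst hk
        rw [qtgt_high_le h hm a b hp le_rfl, downT_self, qiter_cross h.le le_rfl hm,
          iterId_self]
        rw [qcomp_high_eq h hm hm hp (parallel_refl A.C k b) rfl hp]
      · rw [qtgt_high_gt h hm a b hp hk, qiter_high h.le hk hp hm,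
          qcomp_high_gt h hm hm hp hp hk]
  ident_comp := by
    intro k m h x y hc
    change QCell n A m at x y
    cases x with
    | low hm a =>
      cases y with
      | low hm2 b =>
        have hab := qcomposable_low (hm := hm) (hm' := hm2) h hc
        show qident m (qcomp h (.low hm a) (.low hm2 b))
          = qcomp (h.trans (Nat.lt_succ_self m)) (qident m (.low hm a)) (qident m (.low hm2 b))
        by_cases h' : m + 1 ≤ n
        · rw [qcomp_low, qident_low hm h' (A.comp h a b), qident_low hm h' a,
            qident_low hm2 h' b, qcomp_low]
          exact low_congr _ _ (A.ident_comp h a b hab)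
        · have e : m = n := by omega
          subst e
          rw [qcomp_low, qident_cross le_rfl (by omega) (A.comp h a b),
            qident_cross le_rfl (by omega) a, qident_cross le_rfl (by omega) b,
            qcomp_high_lt (h.trans (Nat.lt_succ_self m)) (Nat.lt_succ_self m)
              (Nat.lt_succ_self m) (parallel_refl A.C m a) (parallel_refl A.C m b) h
              (parallel_refl A.C m (A.comp h a b))]
      | high hm2 a2 b2 hp2 => exact absurd hm (by omega)
    | high hm a1 b1 hp1 =>
      cases y with
      | low hm2 b => exact absurd hm2 (by omega)
      | high hm2 a2 b2 hp2 =>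
        show qident m (qcomp h (.high hm a1 b1 hp1) (.high hm2 a2 b2 hp2))
          = qcomp (h.trans (Nat.lt_succ_self m)) (qident m (.high hm a1 b1 hp1))
              (qident m (.high hm2 a2 b2 hp2))
        rcases lt_trichotomy k n with hk | hk | hk
        · by_cases hq : Parallel A.C n (A.comp hk a1 a2) (A.comp hk b1 b2)
          · rw [qcomp_high_lt h hm hm2 hp1 hp2 hk hq, qident_high hm hq (by omega),
              qident_high hm hp1 (by omega), qident_high hm2 hp2 (by omega),
              qcomp_high_lt (h.trans (Nat.lt_succ_self m)) (by omega) (by omega) hp1 hp2 hk hq]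
          · rw [qcomp_high_lt_junk h hm hm2 hp1 hp2 hk hq, qident_high hm hp1 (by omega),
              qident_high hm2 hp2 (by omega),
              qcomp_high_lt_junk (h.trans (Nat.lt_succ_self m)) (by omega) (by omega) hp1 hp2 hk hq]
        · subst hk
          by_cases hq : Parallel A.C k a1 b2
          · rw [qcomp_high_eq h hm hm2 hp1 hp2 rfl hq, qident_high hm hq (by omega),
              qident_high hm hp1 (by omega), qident_high hm2 hp2 (by omega),
              qcomp_high_eq (h.trans (Nat.lt_succ_self m)) (by omega) (by omega) hp1 hp2 rfl hq]
          · rw [qcomp_high_eq_junk h hm hm2 hp1 hp2 rfl hq, qident_high hm hp1 (by omega),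
              qident_high hm2 hp2 (by omega),
              qcomp_high_eq_junk (h.trans (Nat.lt_succ_self m)) (by omega) (by omega) hp1 hp2 rfl hq]
        · rw [qcomp_high_gt h hm hm2 hp1 hp2 hk, qident_high hm2 hp2 (by omega),
            qident_high hm hp1 (by omega),
            qcomp_high_gt (h.trans (Nat.lt_succ_self m)) (by omega) (by omega) hp1 hp2 hk]
  interchange := by
    intro j k m hj hk x y z w hc1 hc2 hc3
    change QCell n A m at x y z w
    have hjm : j < m := hj.trans hk
    cases x with
    | low hm a =>
      cases y with
      | low hm2 b =>
        cases z with
        | low hm3 c =>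
          cases w with
          | low hm4 d =>
            have e1 := qcomposable_low (hm := hm) (hm' := hm2) hk hc1
            have e2 := qcomposable_low (hm := hm3) (hm' := hm4) hk hc2
            have e3 := qcomposable_low (hm := hm) (hm' := hm3) hjm hc3
            show qcomp hjm (qcomp hk (.low hm a) (.low hm2 b)) (qcomp hk (.low hm3 c) (.low hm4 d))
              = qcomp hk (qcomp hjm (.low hm a) (.low hm3 c)) (qcomp hjm (.low hm2 b) (.low hm4 d))
            rw [qcomp_low, qcomp_low, qcomp_low, qcomp_low, qcomp_low, qcomp_low]
            exact low_congr _ _ (A.interchange hj hk a b c d e1 e2 e3)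
          | high hm4 a4 b4 hp4 => exact absurd hm (by omega)
        | high hm3 a3 b3 hp3 => exact absurd hm (by omega)
      | high hm2 a2 b2 hp2 => exact absurd hm (by omega)
    | high hm a1 b1 hp1 =>
      cases y with
      | low hm2 b => exact absurd hm2 (by omega)
      | high hm2 a2 b2 hp2 =>
        cases z with
        | low hm3 c => exact absurd hm3 (by omega)
        | high hm3 a3 b3 hp3 =>
          cases w with
          | low hm4 d => exact absurd hm4 (by omega)
          | high hm4 a4 b4 hp4 =>
            show qcomp hjm (qcomp hk (.high hm a1 b1 hp1) (.high hm2 a2 b2 hp2))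
                (qcomp hk (.high hm3 a3 b3 hp3) (.high hm4 a4 b4 hp4))
              = qcomp hk (qcomp hjm (.high hm a1 b1 hp1) (.high hm3 a3 b3 hp3))
                  (qcomp hjm (.high hm2 a2 b2 hp2) (.high hm4 a4 b4 hp4))
            rcases lt_trichotomy k n with hkn | hkn | hkn
            · obtain ⟨c11, c12⟩ := qcomposable_lt (hm := hm) (hm' := hm2) hk hkn hc1
              obtain ⟨c21, c22⟩ := qcomposable_lt (hm := hm3) (hm' := hm4) hk hkn hc2
              have hjn : j < n := hj.trans hkn
              obtain ⟨c31, c32⟩ := qcomposable_lt (hm := hm) (hm' := hm3) hjm hjn hc3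
              have hqxy := parallel_comp hkn hp1 hp2 c11 c12
              have hqzw := parallel_comp hkn hp3 hp4 c21 c22
              have f1 : ctgt A.C hjn (A.comp hkn a1 a2) = csrc A.C hjn (A.comp hkn a3 a4) := by
                rw [(A.bdry_comp_lower hj hkn a1 a2 c11).2,
                  (A.bdry_comp_lower hj hkn a3 a4 c21).1]
                exact c31
              have f2 : ctgt A.C hjn (A.comp hkn b1 b2) = csrc A.C hjn (A.comp hkn b3 b4) := by
                rw [(A.bdry_comp_lower hj hkn b1 b2 c12).2,
                  (A.bdry_comp_lower hj hkn b3 b4 c22).1]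
                exact c32
              have hqbig := parallel_comp hjn hqxy hqzw f1 f2
              have c41 : ctgt A.C hjn a2 = csrc A.C hjn a4 := by
                rw [← ctgt_csrc A.C hj hkn a2, ← c11, ctgt_ctgt A.C hj hkn a1,
                  ← csrc_csrc A.C hj hkn a4, ← c21, csrc_ctgt A.C hj hkn a3]
                exact c31
              have c42 : ctgt A.C hjn b2 = csrc A.C hjn b4 := by
                rw [← ctgt_csrc A.C hj hkn b2, ← c12, ctgt_ctgt A.C hj hkn b1,
                  ← csrc_csrc A.C hj hkn b4, ← c22, csrc_ctgt A.C hj hkn b3]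
                exact c32
              have hqxz := parallel_comp hjn hp1 hp3 c31 c32
              have hqyw := parallel_comp hjn hp2 hp4 c41 c42
              have g1 : ctgt A.C hkn (A.comp hjn a1 a3) = csrc A.C hkn (A.comp hjn a2 a4) := by
                rw [(A.bdry_comp_mid hjn hj hkn a1 a3 c31).2,
                  (A.bdry_comp_mid hjn hj hkn a2 a4 c41).1, c11, c21]
              have g2 : ctgt A.C hkn (A.comp hjn b1 b3) = csrc A.C hkn (A.comp hjn b2 b4) := by
                rw [(A.bdry_comp_mid hjn hj hkn b1 b3 c32).2,
                  (A.bdry_comp_mid hjn hj hkn b2 b4 c42).1, c12, c22]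
              have hqbig' := parallel_comp hkn hqxz hqyw g1 g2
              refine Eq.trans (b := QCell.high hm
                  (A.comp hjn (A.comp hkn a1 a2) (A.comp hkn a3 a4))
                  (A.comp hjn (A.comp hkn b1 b2) (A.comp hkn b3 b4)) hqbig) ?_ ?_
              · rw [qcomp_high_lt hk hm hm2 hp1 hp2 hkn hqxy,
                  qcomp_high_lt hk hm3 hm4 hp3 hp4 hkn hqzw,
                  qcomp_high_lt hjm hm hm3 hqxy hqzw hjn hqbig]
              · rw [qcomp_high_lt hjm hm hm3 hp1 hp3 hjn hqxz,
                  qcomp_high_lt hjm hm2 hm4 hp2 hp4 hjn hqyw,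
                  qcomp_high_lt hk hm hm2 hqxz hqyw hkn hqbig']
                exact high_congr _ _ (A.interchange hj hkn a1 a2 a3 a4 c11 c21 c31)
                  (A.interchange hj hkn b1 b2 b3 b4 c12 c22 c32)
            · subst hkn
              have e1 := qcomposable_eq (hm := hm) (hm' := hm2) hk hc1
              have e2 := qcomposable_eq (hm := hm3) (hm' := hm4) hk hc2
              obtain ⟨c31, c32⟩ := qcomposable_lt (hm := hm) (hm' := hm3) hjm hj hc3
              have hqxy : Parallel A.C k a1 b2 := parallel_trans hp1 (by rw [e1]; exact hp2)
              have hqzw : Parallel A.C k a3 b4 := parallel_trans hp3 (by rw [e2]; exact hp4)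
              have f2 : ctgt A.C hj b2 = csrc A.C hj b4 := by
                rw [← parallel_tgt hp2 hj, ← e1, ← parallel_src hp4 hj, ← e2]
                exact c32
              have hqL := parallel_comp hj hqxy hqzw c31 f2
              have c41 : ctgt A.C hj a2 = csrc A.C hj a4 := by
                rw [← e1, ← e2]
                exact c32
              have hqxz := parallel_comp hj hp1 hp3 c31 c32
              have hqyw := parallel_comp hj hp2 hp4 c41 f2
              refine Eq.trans (b := QCell.high hm (A.comp hj a1 a3) (A.comp hj b2 b4) hqL) ?_ ?_
              · rw [qcomp_high_eq hk hm hm2 hp1 hp2 rfl hqxy,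
                  qcomp_high_eq hk hm3 hm4 hp3 hp4 rfl hqzw,
                  qcomp_high_lt hjm hm hm3 hqxy hqzw hj hqL]
              · rw [qcomp_high_lt hjm hm hm3 hp1 hp3 hj hqxz,
                  qcomp_high_lt hjm hm2 hm4 hp2 hp4 hj hqyw,
                  qcomp_high_eq hk hm hm2 hqxz hqyw rfl hqL]
            · obtain ⟨ex1, ex2⟩ := qcomposable_gt (hm := hm) (hm' := hm2) hk hkn hc1
              obtain ⟨ez1, ez2⟩ := qcomposable_gt (hm := hm3) (hm' := hm4) hk hkn hc2
              rcases lt_trichotomy j n with hjn | hjn | hjn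
              · obtain ⟨c31, c32⟩ := qcomposable_lt (hm := hm) (hm' := hm3) hjm hjn hc3
                have c41 : ctgt A.C hjn a2 = csrc A.C hjn a4 := by
                  rw [← ex1, ← ez1]; exact c31
                have c42 : ctgt A.C hjn b2 = csrc A.C hjn b4 := by
                  rw [← ex2, ← ez2]; exact c32
                have hqyw := parallel_comp hjn hp2 hp4 c41 c42
                have hqxz := parallel_comp hjn hp1 hp3 c31 c32
                refine Eq.trans (b := QCell.high hm (A.comp hjn a2 a4) (A.comp hjn b2 b4) hqyw) ?_ ?_
                · rw [qcomp_high_gt hk hm hm2 hp1 hp2 hkn,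
                    qcomp_high_gt hk hm3 hm4 hp3 hp4 hkn,
                    qcomp_high_lt hjm hm hm3 hp2 hp4 hjn hqyw]
                · rw [qcomp_high_lt hjm hm hm3 hp1 hp3 hjn hqxz,
                    qcomp_high_lt hjm hm2 hm4 hp2 hp4 hjn hqyw,
                    qcomp_high_gt hk hm hm2 hqxz hqyw hkn]
              · subst hjn
                have e3 := qcomposable_eq (hm := hm) (hm' := hm3) hjm hc3
                have eb2a4 : b2 = a4 := by rw [← ex2, e3]; exact ez1
                have hqyw : Parallel A.C j a2 b4 :=
                  parallel_trans hp2 (by rw [eb2a4]; exact hp4)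
                have hqxz : Parallel A.C j a1 b3 :=
                  parallel_trans hp1 (by rw [e3]; exact hp3)
                refine Eq.trans (b := QCell.high hm a2 b4 hqyw) ?_ ?_
                · rw [qcomp_high_gt hk hm hm2 hp1 hp2 hkn,
                    qcomp_high_gt hk hm3 hm4 hp3 hp4 hkn,
                    qcomp_high_eq hjm hm hm3 hp2 hp4 rfl hqyw]
                · rw [qcomp_high_eq hjm hm hm3 hp1 hp3 rfl hqxz,
                    qcomp_high_eq hjm hm2 hm4 hp2 hp4 rfl hqyw,
                    qcomp_high_gt hk hm hm2 hqxz hqyw hkn]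
              · obtain ⟨e31, e32⟩ := qcomposable_gt (hm := hm) (hm' := hm3) hjm hjn hc3
                refine Eq.trans (b := QCell.high hm a4 b4 hp4) ?_ ?_
                · rw [qcomp_high_gt hk hm hm2 hp1 hp2 hkn,
                    qcomp_high_gt hk hm3 hm4 hp3 hp4 hkn,
                    qcomp_high_gt hjm hm hm3 hp2 hp4 hjn]
                · rw [qcomp_high_gt hjm hm hm3 hp1 hp3 hjn,
                    qcomp_high_gt hjm hm2 hm4 hp2 hp4 hjn,
                    qcomp_high_gt hk hm hm2 hp3 hp4 hkn]

end Aux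
namespace Aux

variable (n : ℕ) (A B : StrictOmegaCat)

theorem downS_csrc {k j : ℕ} (hk : k ≤ n) (h : n < j) (x : cell A.C j) :
    downS n A hk (csrc A.C h x) = csrc A.C (lt_of_le_of_lt hk h) x := by
  by_cases he : k = n
  · subst he
    rw [downS_self]
  · show gmap A.C (srcLE hk) (gmap A.C (GlobeHom.src h) x) = _
    rw [gmap_gmap, srcLE_of_lt hk (hk.lt_of_ne he)]
    rfl

theorem downT_ctgt {k j : ℕ} (hk : k ≤ n) (h : n < j) (x : cell A.C j) :
    downT n A hk (ctgt A.C h x) = ctgt A.C (lt_of_le_of_lt hk h) x := by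
  by_cases he : k = n
  · subst he
    rw [downT_self]
  · show gmap A.C (tgtLE hk) (gmap A.C (GlobeHom.tgt h) x) = _
    rw [gmap_gmap, tgtLE_of_lt hk (hk.lt_of_ne he)]
    rfl

/-- The components of the canonical comparison `A ⟶ QCat n A`. -/
def rApp (j : ℕ) : cell A.C j → QCell n A j :=
  if hj : j ≤ n then fun x => .low hj x
  else fun x => .high (not_le.mp hj) (csrc A.C (not_le.mp hj) x)
    (ctgt A.C (not_le.mp hj) x) (parallel_boundary A.C (not_le.mp hj) x)

theorem rApp_le {j : ℕ} (hj : j ≤ n) (x : cell A.C j) :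
    rApp n A j x = .low hj x := by rw [rApp, dif_pos hj]

theorem rApp_gt {j : ℕ} (hj : n < j) (x : cell A.C j) :
    rApp n A j x = .high hj (csrc A.C hj x) (ctgt A.C hj x)
      (parallel_boundary A.C hj x) := by
  rw [rApp, dif_neg (not_le.mpr hj)]

theorem rApp_nat {k j : ℕ} (v : GlobeHom ⟨k⟩ ⟨j⟩) (x : cell A.C j) :
    rApp n A k (gmap A.C v x) = qact v (rApp n A j x) := by
  cases v with
  | id => exact congrArg (rApp n A k) (gmap_self A.C _ x)
  | src h =>
    show rApp n A k (csrc A.C h x) = qsrc h (rApp n A j x)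
    by_cases hj : j ≤ n
    · have hkn : k ≤ n := (le_of_lt h).trans hj
      rw [rApp_le n A hj, rApp_le n A hkn, qsrc_low]
    · have hj' : n < j := not_le.mp hj
      rw [rApp_gt n A hj']
      by_cases hk : k ≤ n
      · rw [qsrc_high_le _ _ _ _ _ hk, rApp_le n A hk, downS_csrc n A hk hj']
      · have hk' : n < k := not_le.mp hk
        rw [qsrc_high_gt _ _ _ _ _ hk', rApp_gt n A hk']
        exact high_congr _ _ (csrc_csrc A.C hk' h x) (ctgt_csrc A.C hk' h x)
  | tgt h =>
    show rApp n A k (ctgt A.C h x) = qtgt h (rApp n A j x)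
    by_cases hj : j ≤ n
    · have hkn : k ≤ n := (le_of_lt h).trans hj
      rw [rApp_le n A hj, rApp_le n A hkn, qtgt_low]
    · have hj' : n < j := not_le.mp hj
      rw [rApp_gt n A hj']
      by_cases hk : k ≤ n
      · rw [qtgt_high_le _ _ _ _ _ hk, rApp_le n A hk, downT_ctgt n A hk hj']
      · have hk' : n < k := not_le.mp hk
        rw [qtgt_high_gt _ _ _ _ _ hk', rApp_gt n A hk']
        exact high_congr _ _ (csrc_ctgt A.C hk' h x) (ctgt_ctgt A.C hk' h x)

/-- The canonical comparison as a map of globular sets. -/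
def rNat : A.C ⟶ QGlob n A where
  app g := ↾(rApp n A g.unop.n)
  naturality {c c'} f := by
    ext x
    exact rApp_nat n A f.unop x

theorem csrc_of_ident_lower {k m : ℕ} (hk : k < m) (x : cell A.C m) :
    csrc A.C (hk.trans (Nat.lt_succ_self m)) (A.ident m x) = csrc A.C hk x := by
  rw [← csrc_csrc A.C hk (Nat.lt_succ_self m), A.src_ident]

theorem ctgt_of_ident_lower {k m : ℕ} (hk : k < m) (x : cell A.C m) :
    ctgt A.C (hk.trans (Nat.lt_succ_self m)) (A.ident m x) = ctgt A.C hk x := by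
  rw [← ctgt_ctgt A.C hk (Nat.lt_succ_self m), A.tgt_ident]

/-- The canonical comparison as a strict map of strict ω-categories. -/
noncomputable def rHom : OmegaHom A (QCat n A) where
  f := rNat n A
  comp_map := by
    intro k m h x y hc
    show rApp n A m (A.comp h x y) = qcomp h (rApp n A m x) (rApp n A m y)
    by_cases hm : m ≤ n
    · rw [rApp_le n A hm, rApp_le n A hm, rApp_le n A hm, qcomp_low]
    · have hm' : n < m := not_le.mp hm
      rw [rApp_gt n A hm', rApp_gt n A hm', rApp_gt n A hm']
      rcases lt_trichotomy k n with hk | hk | hk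
      · have e1 : ctgt A.C hk (csrc A.C hm' x) = csrc A.C hk (csrc A.C hm' y) := by
          rw [ctgt_csrc A.C hk hm' x, csrc_csrc A.C hk hm' y]; exact hc
        have e2 : ctgt A.C hk (ctgt A.C hm' x) = csrc A.C hk (ctgt A.C hm' y) := by
          rw [ctgt_ctgt A.C hk hm' x, csrc_ctgt A.C hk hm' y]; exact hc
        have hq := parallel_comp hk (parallel_boundary A.C hm' x)
          (parallel_boundary A.C hm' y) e1 e2
        rw [qcomp_high_lt h hm' hm' _ _ hk hq]
        exact high_congr _ _ (A.bdry_comp_mid h hk hm' x y hc).1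
          (A.bdry_comp_mid h hk hm' x y hc).2
      · subst hk
        have hq : Parallel A.C k (csrc A.C hm' x) (ctgt A.C hm' y) :=
          parallel_trans (parallel_boundary A.C hm' x)
            (by rw [hc]; exact parallel_boundary A.C hm' y)
        rw [qcomp_high_eq h hm' hm' _ _ rfl hq]
        exact high_congr _ _ (A.src_comp h x y hc) (A.tgt_comp h x y hc)
      · rw [qcomp_high_gt h hm' hm' _ _ hk]
        have e1 : csrc A.C hm' x = csrc A.C hm' y := by
          rw [← csrc_ctgt A.C hk h x, hc, csrc_csrc A.C hk h y]
        have e2 : ctgt A.C hm' x = ctgt A.C hm' y := by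
          rw [← ctgt_ctgt A.C hk h x, hc, ctgt_csrc A.C hk h y]
        exact high_congr _ _ (((A.bdry_comp_lower hk h x y hc).1).trans e1)
          (((A.bdry_comp_lower hk h x y hc).2).trans e2)
  ident_map := by
    intro m x
    show rApp n A (m + 1) (A.ident m x) = qident m (rApp n A m x)
    by_cases h1 : m + 1 ≤ n
    · rw [rApp_le n A h1, rApp_le n A ((Nat.le_succ m).trans h1),
        qident_low ((Nat.le_succ m).trans h1) h1 x]
    · by_cases h2 : m ≤ n
      · have e : m = n := by omega
        subst e
        rw [rApp_le m A le_rfl, rApp_gt m A (by omega), qident_cross le_rfl (by omega) x]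
        exact high_congr _ _ (A.src_ident m x) (A.tgt_ident m x)
      · have hm' : n < m := not_le.mp h2
        rw [rApp_gt n A hm', rApp_gt n A (hm'.trans (Nat.lt_succ_self m)),
          qident_high hm' (parallel_boundary A.C hm' x) (by omega)]
        exact high_congr _ _ (csrc_of_ident_lower A hm' x) (ctgt_of_ident_lower A hm' x)

end Aux
namespace Aux

theorem app_gmap {X Y : GlobularSet} (w : X ⟶ Y) {k m : ℕ} (v : GlobeHom ⟨k⟩ ⟨m⟩)
    (x : cell X m) : w.app (op ⟨k⟩) (gmap X v x) = gmap Y v (w.app (op ⟨m⟩) x) :=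
  NatTrans.naturality_apply w (Quiver.Hom.op (v : (⟨k⟩ : Globe) ⟶ ⟨m⟩)) x

theorem parallel_map {n : ℕ} {X Y : GlobularSet} (w : X ⟶ Y) {a b : cell X n}
    (hp : Parallel X n a b) :
    Parallel Y n (w.app (op ⟨n⟩) a) (w.app (op ⟨n⟩) b) := by
  cases n with
  | zero => trivial
  | succ n =>
    exact ⟨by rw [← app_csrc, ← app_csrc, hp.1], by rw [← app_ctgt, ← app_ctgt, hp.2]⟩

variable {n : ℕ} {A B : StrictOmegaCat}

/-- Action of an ω-functor on the completed cells. -/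
def qfApp (φ : OmegaHom A B) : ∀ {j : ℕ}, QCell n A j → QCell n B j
  | _, .low h a => .low h (φ.f.app _ a)
  | _, .high h a b hp =>
      .high h (φ.f.app (op ⟨n⟩) a) (φ.f.app (op ⟨n⟩) b) (parallel_map φ.f hp)

theorem qfApp_downS (φ : OmegaHom A B) {k : ℕ} (hk : k ≤ n) (a : cell A.C n) :
    φ.f.app (op ⟨k⟩) (downS n A hk a) = downS n B hk (φ.f.app (op ⟨n⟩) a) :=
  app_gmap φ.f (srcLE hk) a

theorem qfApp_downT (φ : OmegaHom A B) {k : ℕ} (hk : k ≤ n) (a : cell A.C n) :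
    φ.f.app (op ⟨k⟩) (downT n A hk a) = downT n B hk (φ.f.app (op ⟨n⟩) a) :=
  app_gmap φ.f (tgtLE hk) a

theorem qfApp_low (φ : OmegaHom A B) {j : ℕ} (h : j ≤ n) (a : cell A.C j) :
    qfApp φ (.low h a : QCell n A j) = .low h (φ.f.app (op ⟨j⟩) a) := rfl

theorem qfApp_high (φ : OmegaHom A B) {j : ℕ} (h : n < j) (a b : cell A.C n)
    (hp : Parallel A.C n a b) :
    qfApp φ (.high h a b hp : QCell n A j)
      = .high h (φ.f.app (op ⟨n⟩) a) (φ.f.app (op ⟨n⟩) b) (parallel_map φ.f hp) := rfl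

theorem qfApp_nat (φ : OmegaHom A B) {a b : Globe} (v : GlobeHom a b)
    (x : QCell n A b.n) : qfApp φ (qact v x) = qact v (qfApp φ x) := by
  cases v with
  | id => rfl
  | src h =>
    show qfApp φ (qsrc h x) = qsrc h (qfApp φ x)
    cases x with
    | low hj aa =>
      rw [qsrc_low]
      show QCell.low _ (φ.f.app _ (csrc A.C h aa)) = QCell.low _ (csrc B.C h (φ.f.app _ aa))
      rw [app_csrc]
    | high hm aa bb hp =>
      rw [qfApp_high φ hm aa bb hp]
      by_cases hk : a.n ≤ n
      · rw [qsrc_high_le h hm aa bb hp hk,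
          qsrc_high_le h hm (φ.f.app _ aa) (φ.f.app _ bb) (parallel_map φ.f hp) hk]
        show QCell.low _ (φ.f.app _ (downS n A hk aa)) = _
        rw [qfApp_downS φ hk aa]
      · rw [qsrc_high_gt h hm aa bb hp (not_le.mp hk),
          qsrc_high_gt h hm (φ.f.app _ aa) (φ.f.app _ bb) (parallel_map φ.f hp) (not_le.mp hk)]
        rfl
  | tgt h =>
    show qfApp φ (qtgt h x) = qtgt h (qfApp φ x)
    cases x with
    | low hj aa =>
      rw [qtgt_low]
      show QCell.low _ (φ.f.app _ (ctgt A.C h aa)) = QCell.low _ (ctgt B.C h (φ.f.app _ aa))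
      rw [app_ctgt]
    | high hm aa bb hp =>
      rw [qfApp_high φ hm aa bb hp]
      by_cases hk : a.n ≤ n
      · rw [qtgt_high_le h hm aa bb hp hk,
          qtgt_high_le h hm (φ.f.app _ aa) (φ.f.app _ bb) (parallel_map φ.f hp) hk]
        show QCell.low _ (φ.f.app _ (downT n A hk bb)) = _
        rw [qfApp_downT φ hk bb]
      · rw [qtgt_high_gt h hm aa bb hp (not_le.mp hk),
          qtgt_high_gt h hm (φ.f.app _ aa) (φ.f.app _ bb) (parallel_map φ.f hp) (not_le.mp hk)]
        rfl

variable (n)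

/-- Functoriality of the completion. -/
noncomputable def QmapHom (φ : OmegaHom A B) : OmegaHom (QCat n A) (QCat n B) where
  f :=
    { app := fun g => ↾(qfApp φ (j := g.unop.n))
      naturality := fun {c c'} f => by
        ext x
        exact qfApp_nat φ f.unop x }
  comp_map := by
    intro k m h x y hc
    change QCell n A m at x y
    show qfApp φ (qcomp h x y) = qcomp h (qfApp φ x) (qfApp φ y)
    cases x with
    | low hm a =>
      cases y with
      | low hm2 b =>
        have hab := qcomposable_low (hm := hm) (hm' := hm2) h hc
        rw [qcomp_low]
        show QCell.low hm (φ.f.app _ (A.comp h a b))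
          = qcomp h (.low hm (φ.f.app _ a)) (.low hm2 (φ.f.app _ b))
        rw [qcomp_low, φ.comp_map h a b hab]
      | high hm2 a2 b2 hp2 => exact absurd hm (by omega)
    | high hm a1 b1 hp1 =>
      cases y with
      | low hm2 b => exact absurd hm2 (by omega)
      | high hm2 a2 b2 hp2 =>
        rw [qfApp_high φ hm a1 b1 hp1, qfApp_high φ hm2 a2 b2 hp2]
        rcases lt_trichotomy k n with hk | hk | hk
        · obtain ⟨e1, e2⟩ := qcomposable_lt (hm := hm) (hm' := hm2) h hk hc
          have hq := parallel_comp hk hp1 hp2 e1 e2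
          have f1 : ctgt B.C hk (φ.f.app _ a1) = csrc B.C hk (φ.f.app _ a2) := by
            rw [← app_ctgt, ← app_csrc, e1]
          have f2 : ctgt B.C hk (φ.f.app _ b1) = csrc B.C hk (φ.f.app _ b2) := by
            rw [← app_ctgt, ← app_csrc, e2]
          have hq' := parallel_comp hk (parallel_map φ.f hp1) (parallel_map φ.f hp2) f1 f2
          rw [qcomp_high_lt h hm hm2 hp1 hp2 hk hq, qfApp_high φ hm _ _ hq,
            qcomp_high_lt h hm hm2 (parallel_map φ.f hp1) (parallel_map φ.f hp2) hk hq']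
          exact high_congr _ _ (φ.comp_map hk a1 a2 e1) (φ.comp_map hk b1 b2 e2)
        · subst hk
          have e := qcomposable_eq (hm := hm) (hm' := hm2) h hc
          have hq : Parallel A.C k a1 b2 := parallel_trans hp1 (by rw [e]; exact hp2)
          rw [qcomp_high_eq h hm hm2 hp1 hp2 rfl hq, qfApp_high φ hm a1 b2 hq,
            qcomp_high_eq h hm hm2 (parallel_map φ.f hp1) (parallel_map φ.f hp2) rfl
              (parallel_map φ.f hq)]
        · rw [qcomp_high_gt h hm hm2 hp1 hp2 hk, qfApp_high φ hm a2 b2 hp2,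
            qcomp_high_gt h hm hm2 (parallel_map φ.f hp1) (parallel_map φ.f hp2) hk]
  ident_map := by
    intro m x
    change QCell n A m at x
    show qfApp φ (qident m x) = qident m (qfApp φ x)
    cases x with
    | low hm a =>
      by_cases h' : m + 1 ≤ n
      · rw [qident_low hm h' a]
        show QCell.low h' (φ.f.app _ (A.ident m a))
          = qident m (.low hm (φ.f.app _ a))
        rw [qident_low hm h' (φ.f.app _ a), φ.ident_map m a]
      · have e : m = n := by omega
        subst e
        rw [qident_cross le_rfl (by omega) a]
        show QCell.high _ (φ.f.app _ a) (φ.f.app _ a) _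
          = qident m (.low hm (φ.f.app _ a))
        rw [qident_cross le_rfl (by omega) (φ.f.app _ a)]
    | high hm a b hp =>
      rw [qfApp_high φ hm a b hp, qident_high hm hp (by omega),
        qfApp_high φ (show n < m + 1 by omega) a b hp,
        qident_high hm (parallel_map φ.f hp) (by omega)]

end Aux
namespace Aux

theorem gmap_srcLE_csrc (Z : GlobularSet) {n k j : ℕ} (hk : k ≤ n) (h : n < j)
    (x : cell Z j) :
    gmap Z (srcLE hk) (csrc Z h x) = csrc Z (lt_of_le_of_lt hk h) x := by
  by_cases he : k = n
  · subst he
    rw [srcLE_refl]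
    show gmap Z (GlobeHom.id ⟨k⟩) _ = _
    rw [gmap_self]
  · show gmap Z (srcLE hk) (gmap Z (GlobeHom.src h) x) = _
    rw [gmap_gmap, srcLE_of_lt hk (hk.lt_of_ne he)]
    rfl

theorem gmap_tgtLE_ctgt (Z : GlobularSet) {n k j : ℕ} (hk : k ≤ n) (h : n < j)
    (x : cell Z j) :
    gmap Z (tgtLE hk) (ctgt Z h x) = ctgt Z (lt_of_le_of_lt hk h) x := by
  by_cases he : k = n
  · subst he
    rw [tgtLE_refl]
    show gmap Z (GlobeHom.id ⟨k⟩) _ = _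
    rw [gmap_self]
  · show gmap Z (tgtLE hk) (gmap Z (GlobeHom.tgt h) x) = _
    rw [gmap_gmap, tgtLE_of_lt hk (hk.lt_of_ne he)]
    rfl

section Main

variable (F : GlobularSet ⥤ StrictOmegaCat) (adj : F ⊣ forgetOmega)
variable (n : ℕ) {X Y : GlobularSet} (f : X ⟶ Y) (hf : NBijective n f)

/-- Componentwise inverse of an `n`-bijective map. -/
noncomputable def ginv {j : ℕ} (hj : j ≤ n) : cell Y j → cell X j :=
  fun y => (Equiv.ofBijective _ (hf j hj)).symm y

theorem f_ginv {j : ℕ} (hj : j ≤ n) (y : cell Y j) :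
    f.app (op ⟨j⟩) (ginv n f hf hj y) = y :=
  (Equiv.ofBijective _ (hf j hj)).apply_symm_apply y

theorem ginv_f {j : ℕ} (hj : j ≤ n) (x : cell X j) :
    ginv n f hf hj (f.app (op ⟨j⟩) x) = x :=
  (Equiv.ofBijective _ (hf j hj)).symm_apply_apply x

theorem ginv_gmap {k j : ℕ} (v : GlobeHom ⟨k⟩ ⟨j⟩) (hj : j ≤ n) (hk : k ≤ n)
    (y : cell Y j) :
    gmap X v (ginv n f hf hj y) = ginv n f hf hk (gmap Y v y) := by
  apply (hf k hk).1
  rw [f_ginv, app_gmap f v, f_ginv]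

theorem parallel_ginv {a b : cell Y n} (hp : Parallel Y n a b) :
    Parallel X n (ginv n f hf le_rfl a) (ginv n f hf le_rfl b) := by
  cases n with
  | zero => trivial
  | succ m =>
    constructor
    · show gmap X (GlobeHom.src (Nat.lt_succ_self m)) _
        = gmap X (GlobeHom.src (Nat.lt_succ_self m)) _
      rw [ginv_gmap (m + 1) f hf (GlobeHom.src (Nat.lt_succ_self m)) le_rfl (Nat.le_succ m) a,
        ginv_gmap (m + 1) f hf (GlobeHom.src (Nat.lt_succ_self m)) le_rfl (Nat.le_succ m) b]
      exact congrArg _ hp.1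
    · show gmap X (GlobeHom.tgt (Nat.lt_succ_self m)) _
        = gmap X (GlobeHom.tgt (Nat.lt_succ_self m)) _
      rw [ginv_gmap (m + 1) f hf (GlobeHom.tgt (Nat.lt_succ_self m)) le_rfl (Nat.le_succ m) a,
        ginv_gmap (m + 1) f hf (GlobeHom.tgt (Nat.lt_succ_self m)) le_rfl (Nat.le_succ m) b]
      exact congrArg _ hp.2

/-- The unit of the adjunction, componentwise. -/
noncomputable abbrev eta (Z : GlobularSet) {j : ℕ} :
    cell Z j → cell (F.obj Z).C j :=
  (adj.unit.app Z).app (op ⟨j⟩)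

theorem unit_nat {j : ℕ} (x : cell X j) :
    (F.map f).f.app (op ⟨j⟩) (eta F adj X x) = eta F adj Y (f.app (op ⟨j⟩) x) := by
  have h0 := adj.unit.naturality f
  exact (congrArg (fun (t : X ⟶ (F ⋙ forgetOmega).obj Y) => t.app (op ⟨j⟩) x) h0).symm

/-- The comparison map `Y ⟶ U (QCat n (F X))`, componentwise. -/
noncomputable def gApp (j : ℕ) : cell Y j → QCell n (F.obj X) j :=
  if hj : j ≤ n then fun y => .low hj (eta F adj X (ginv n f hf hj y))
  else fun y =>
    .high (not_le.mp hj)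
      (eta F adj X (ginv n f hf le_rfl (csrc Y (not_le.mp hj) y)))
      (eta F adj X (ginv n f hf le_rfl (ctgt Y (not_le.mp hj) y)))
      (show Parallel (F.obj X).C n _ _ from parallel_map (adj.unit.app X)
        (parallel_ginv n f hf (parallel_boundary Y (not_le.mp hj) y)))

theorem gApp_le {j : ℕ} (hj : j ≤ n) (y : cell Y j) :
    gApp F adj n f hf j y = .low hj (eta F adj X (ginv n f hf hj y)) := by
  rw [gApp, dif_pos hj]

theorem gApp_gt {j : ℕ} (hj : n < j) (y : cell Y j) :
    gApp F adj n f hf j y = .high hj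
      (eta F adj X (ginv n f hf le_rfl (csrc Y hj y)))
      (eta F adj X (ginv n f hf le_rfl (ctgt Y hj y)))
      (show Parallel (F.obj X).C n _ _ from parallel_map (adj.unit.app X)
        (parallel_ginv n f hf (parallel_boundary Y hj y))) := by
  rw [gApp, dif_neg (not_le.mpr hj)]

theorem eta_gmap {Z : GlobularSet} {k j : ℕ} (v : GlobeHom ⟨k⟩ ⟨j⟩) (x : cell Z j) :
    eta F adj Z (gmap Z v x) = gmap (F.obj Z).C v (eta F adj Z x) :=
  app_gmap (adj.unit.app Z) v x

theorem gApp_nat {k j : ℕ} (v : GlobeHom ⟨k⟩ ⟨j⟩) (y : cell Y j) :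
    gApp F adj n f hf k (gmap Y v y) = qact v (gApp F adj n f hf j y) := by
  cases v with
  | id => exact congrArg (gApp F adj n f hf k) (gmap_self Y _ y)
  | src h =>
    show gApp F adj n f hf k (csrc Y h y) = qsrc h (gApp F adj n f hf j y)
    by_cases hj : j ≤ n
    · have hkn : k ≤ n := (le_of_lt h).trans hj
      rw [gApp_le F adj n f hf hj, gApp_le F adj n f hf hkn, qsrc_low]
      refine low_congr _ _ ?_
      show _ = gmap (F.obj X).C (GlobeHom.src h) (eta F adj X (ginv n f hf hj y))
      rw [← eta_gmap F adj (GlobeHom.src h), ginv_gmap n f hf (GlobeHom.src h) hj hkn y]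
      rfl
    · have hj' : n < j := not_le.mp hj
      rw [gApp_gt F adj n f hf hj']
      by_cases hk : k ≤ n
      · rw [qsrc_high_le _ _ _ _ _ hk, gApp_le F adj n f hf hk]
        refine low_congr _ _ ?_
        show _ = downS n (F.obj X) hk _
        rw [downS, ← eta_gmap F adj (srcLE hk),
          ginv_gmap n f hf (srcLE hk) le_rfl hk, gmap_srcLE_csrc Y hk hj' y]
      · have hk' : n < k := not_le.mp hk
        rw [qsrc_high_gt _ _ _ _ _ hk', gApp_gt F adj n f hf hk']
        refine high_congr _ _ ?_ ?_
        · exact congrArg _ (congrArg _ (csrc_csrc Y hk' h y))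
        · exact congrArg _ (congrArg _ (ctgt_csrc Y hk' h y))
  | tgt h =>
    show gApp F adj n f hf k (ctgt Y h y) = qtgt h (gApp F adj n f hf j y)
    by_cases hj : j ≤ n
    · have hkn : k ≤ n := (le_of_lt h).trans hj
      rw [gApp_le F adj n f hf hj, gApp_le F adj n f hf hkn, qtgt_low]
      refine low_congr _ _ ?_
      show _ = gmap (F.obj X).C (GlobeHom.tgt h) (eta F adj X (ginv n f hf hj y))
      rw [← eta_gmap F adj (GlobeHom.tgt h), ginv_gmap n f hf (GlobeHom.tgt h) hj hkn y]
      rfl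
    · have hj' : n < j := not_le.mp hj
      rw [gApp_gt F adj n f hf hj']
      by_cases hk : k ≤ n
      · rw [qtgt_high_le _ _ _ _ _ hk, gApp_le F adj n f hf hk]
        refine low_congr _ _ ?_
        show _ = downT n (F.obj X) hk _
        rw [downT, ← eta_gmap F adj (tgtLE hk),
          ginv_gmap n f hf (tgtLE hk) le_rfl hk, gmap_tgtLE_ctgt Y hk hj' y]
      · have hk' : n < k := not_le.mp hk
        rw [qtgt_high_gt _ _ _ _ _ hk', gApp_gt F adj n f hf hk']
        refine high_congr _ _ ?_ ?_
        · exact congrArg _ (congrArg _ (csrc_ctgt Y hk' h y))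
        · exact congrArg _ (congrArg _ (ctgt_ctgt Y hk' h y))

/-- The comparison map as a morphism of globular sets. -/
noncomputable def gNat : Y ⟶ forgetOmega.obj (QCat n (F.obj X)) where
  app g := ↾(gApp F adj n f hf g.unop.n)
  naturality {c c'} u := by
    ext y
    exact gApp_nat F adj n f hf u.unop y

/-- Extensionality via the unit of the adjunction. -/
theorem hom_ext_unit {Z : GlobularSet} {B : StrictOmegaCat} (g₁ g₂ : F.obj Z ⟶ B)
    (h : adj.unit.app Z ≫ forgetOmega.map g₁ = adj.unit.app Z ≫ forgetOmega.map g₂) :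
    g₁ = g₂ := by
  apply (adj.homEquiv Z B).injective
  rw [Adjunction.homEquiv_unit, Adjunction.homEquiv_unit]
  exact h

/-- The induced ω-functor `F Y ⟶ QCat n (F X)`. -/
noncomputable def ghat : F.obj Y ⟶ QCat n (F.obj X) :=
  (adj.homEquiv Y (QCat n (F.obj X))).symm (gNat F adj n f hf)

theorem unit_ghat :
    adj.unit.app Y ≫ forgetOmega.map (ghat F adj n f hf) = gNat F adj n f hf := by
  have h0 := (adj.homEquiv Y (QCat n (F.obj X))).apply_symm_apply (gNat F adj n f hf)
  rwa [Adjunction.homEquiv_unit] at h0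

theorem unit_ghat_app {j : ℕ} (y : cell Y j) :
    (ghat F adj n f hf).f.app (op ⟨j⟩) (eta F adj Y y) = gApp F adj n f hf j y :=
  congrArg (fun (t : Y ⟶ forgetOmega.obj (QCat n (F.obj X))) => t.app (op ⟨j⟩) y)
    (unit_ghat F adj n f hf)

/-- First key identity: `F f ≫ ghat = r`. -/
theorem claim1 : F.map f ≫ ghat F adj n f hf = rHom n (F.obj X) := by
  apply hom_ext_unit F adj
  apply NatTrans.ext
  funext c
  ext x
  obtain ⟨⟨j⟩⟩ := c
  show (ghat F adj n f hf).f.app (op ⟨j⟩) ((F.map f).f.app (op ⟨j⟩) (eta F adj X x))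
    = rApp n (F.obj X) j (eta F adj X x)
  rw [unit_nat F adj f x, unit_ghat_app F adj n f hf (f.app (op ⟨j⟩) x)]
  by_cases hj : j ≤ n
  · rw [gApp_le F adj n f hf hj, rApp_le n (F.obj X) hj, ginv_f n f hf hj x]
  · have hj' : n < j := not_le.mp hj
    rw [gApp_gt F adj n f hf hj', rApp_gt n (F.obj X) hj']
    refine high_congr _ _ ?_ ?_
    · show eta F adj X _ = csrc (F.obj X).C hj' (eta F adj X x)
      rw [← app_csrc f hj' x, ginv_f n f hf le_rfl]
      exact eta_gmap F adj (GlobeHom.src hj') x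
    · show eta F adj X _ = ctgt (F.obj X).C hj' (eta F adj X x)
      rw [← app_ctgt f hj' x, ginv_f n f hf le_rfl]
      exact eta_gmap F adj (GlobeHom.tgt hj') x

/-- Second key identity: `ghat ≫ Q(F f) = r`. -/
theorem claim2 :
    ghat F adj n f hf ≫ QmapHom n (F.map f) = rHom n (F.obj Y) := by
  apply hom_ext_unit F adj
  apply NatTrans.ext
  funext c
  ext y
  obtain ⟨⟨j⟩⟩ := c
  show qfApp (F.map f) ((ghat F adj n f hf).f.app (op ⟨j⟩) (eta F adj Y y))
    = rApp n (F.obj Y) j (eta F adj Y y)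
  rw [unit_ghat_app F adj n f hf y]
  by_cases hj : j ≤ n
  · rw [gApp_le F adj n f hf hj, rApp_le n (F.obj Y) hj, qfApp_low]
    refine low_congr _ _ ?_
    rw [unit_nat F adj f, f_ginv n f hf hj y]
  · have hj' : n < j := not_le.mp hj
    rw [gApp_gt F adj n f hf hj', rApp_gt n (F.obj Y) hj', qfApp_high]
    refine high_congr _ _ ?_ ?_
    · rw [unit_nat F adj f, f_ginv n f hf le_rfl]
      exact eta_gmap F adj (GlobeHom.src hj') y
    · rw [unit_nat F adj f, f_ginv n f hf le_rfl]
      exact eta_gmap F adj (GlobeHom.tgt hj') y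

include adj hf in
/-- The free strict ω-category functor preserves `n`-bijective maps. -/
theorem T_bij : ∀ j : ℕ, j ≤ n → Function.Bijective ((F.map f).f.app (op ⟨j⟩)) := by
  intro j hj
  constructor
  · intro x1 x2 e
    have h1 : (ghat F adj n f hf).f.app (op ⟨j⟩) ((F.map f).f.app (op ⟨j⟩) x1)
        = rApp n (F.obj X) j x1 :=
      congrArg (fun (t : F.obj X ⟶ QCat n (F.obj X)) => t.f.app (op ⟨j⟩) x1)
        (claim1 F adj n f hf)
    have h2 : (ghat F adj n f hf).f.app (op ⟨j⟩) ((F.map f).f.app (op ⟨j⟩) x2)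
        = rApp n (F.obj X) j x2 :=
      congrArg (fun (t : F.obj X ⟶ QCat n (F.obj X)) => t.f.app (op ⟨j⟩) x2)
        (claim1 F adj n f hf)
    have h4 : rApp n (F.obj X) j x1 = rApp n (F.obj X) j x2 := by
      rw [← h1, ← h2, e]
    rw [rApp_le n (F.obj X) hj, rApp_le n (F.obj X) hj] at h4
    exact low_inj h4
  · intro b
    have h2 : qfApp (F.map f) ((ghat F adj n f hf).f.app (op ⟨j⟩) b)
        = rApp n (F.obj Y) j b :=
      congrArg (fun (t : F.obj Y ⟶ QCat n (F.obj Y)) => t.f.app (op ⟨j⟩) b)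
        (claim2 F adj n f hf)
    rw [rApp_le n (F.obj Y) hj] at h2
    cases hc : (ghat F adj n f hf).f.app (op ⟨j⟩) b with
    | low hj' c =>
      rw [hc, qfApp_low] at h2
      exact ⟨c, low_inj h2⟩
    | high hj' c d hp =>
      have hcontra : n < j := hj'
      exact absurd hcontra (by omega)

end Main

end Aux
namespace Aux

/-- In `Type`, pulling back a bijection gives a bijection. -/
theorem pb_bij {P Q R S : Type} {fst : P ⟶ Q} {snd : P ⟶ R} {f : Q ⟶ S} {g : R ⟶ S}
    (hP : IsPullback fst snd f g) (hf : Function.Bijective f) :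
    Function.Bijective snd := by
  constructor
  · intro a1 a2 e
    have e2 : fst a1 = fst a2 := by
      apply hf.1
      show f (fst a1) = f (fst a2)
      calc f (fst a1) = g (snd a1) := ConcreteCategory.congr_hom hP.w a1
        _ = g (snd a2) := by rw [e]
        _ = f (fst a2) := (ConcreteCategory.congr_hom hP.w a2).symm
    have hu := PullbackCone.IsLimit.hom_ext hP.isLimit
      (k := ↾(fun _ : PUnit => a1)) (l := ↾(fun _ : PUnit => a2))
      (by ext; exact e2) (by ext; exact e)
    exact ConcreteCategory.congr_hom hu PUnit.unit
  · intro b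
    have e : f ((Equiv.ofBijective f hf).symm (g b)) = g b :=
      (Equiv.ofBijective f hf).apply_symm_apply (g b)
    have hl := PullbackCone.IsLimit.lift_snd hP.isLimit
      (W := PUnit) (↾(fun _ => (Equiv.ofBijective f hf).symm (g b))) (↾(fun _ => b))
      (by ext; exact e)
    exact ⟨PullbackCone.IsLimit.lift hP.isLimit
      (W := PUnit) (↾(fun _ => (Equiv.ofBijective f hf).symm (g b))) (↾(fun _ => b))
      (by ext; exact e) PUnit.unit, ConcreteCategory.congr_hom hl PUnit.unit⟩

end Aux

open Aux in
theorem statement16'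
    (F : GlobularSet ⥤ StrictOmegaCat) (adj : F ⊣ forgetOmega)
    (P : Monad GlobularSet) (κ : P ⟶ adj.toMonad)
    (hκ : ∀ {X Y : GlobularSet} (f : X ⟶ Y),
      IsPullback (κ.app X) (P.map f) ((adj.toMonad : GlobularSet ⥤ GlobularSet).map f)
        (κ.app Y))
    (n : ℕ) :
    (∀ {X Y : GlobularSet} (f : X ⟶ Y), NBijective n f → NBijective n (P.map f)) ∧
    (∀ {X Y : GlobularSet} (f : X ⟶ Y), NBijective n f →
      NBijective n ((P.free.map f).f)) := by
  have key : ∀ {X Y : GlobularSet} (f : X ⟶ Y), NBijective n f → NBijective n (P.map f) := by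
    intro X Y f hf i hi
    have hT : Function.Bijective
        ((((adj.toMonad : GlobularSet ⥤ GlobularSet).map f)).app (op ⟨i⟩)) :=
      T_bij F adj n f hf i hi
    have hev := (hκ f).map ((evaluation Globeᵒᵖ Type).obj (op ⟨i⟩))
    exact pb_bij hev hT
  exact ⟨key, fun f hf => key f hf⟩
/-- Let `P` be a globular operad (a monad on globular sets
with a cartesian monad morphism `κ` to the strict ω-category monad `T`).  Then
for every natural number `n`, the functor part of `P` preserves `n`-bijective
morphisms; consequently the free `P`-algebra functor `K = P.free` preserves
`n`-bijective maps (on underlying globular sets). -/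
theorem statement16
    (F : GlobularSet ⥤ StrictOmegaCat) (adj : F ⊣ forgetOmega)
    (P : Monad GlobularSet) (κ : P ⟶ adj.toMonad)
    (hκ : ∀ {X Y : GlobularSet} (f : X ⟶ Y),
      IsPullback (κ.app X) (P.map f) ((adj.toMonad : GlobularSet ⥤ GlobularSet).map f)
        (κ.app Y))
    (n : ℕ) :
    (∀ {X Y : GlobularSet} (f : X ⟶ Y), NBijective n f → NBijective n (P.map f)) ∧
    (∀ {X Y : GlobularSet} (f : X ⟶ Y), NBijective n f →
      NBijective n ((P.free.map f).f)) := by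
  exact statement16' F adj P κ (fun {X Y} f => hκ f) n

end Statement16
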